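/- arXiv:1108.4947 — 7 statements merged into one kernel-verified Lean document; each statement's English description precedes it below -/
import Mathlib

section
/- Let G be a finite group acting additively on a finite additive abelian group X, and assume every G-orbit is closed under negation (x ∈ O ⇒ -x ∈ O). Let O_i and O_j be G-orbits, and let x, y, x', y' ∈ X be such that y - x and y' - x' lie in the same G-orbit. Then #{z ∈ X : z - x ∈ O_i and y - z ∈ O_j} = #{z ∈ X : z - x' ∈ O_i and y' - z ∈ O_j}. (This is the well-definedness of the intersection numbers in Theorem 2, which asserts that the orbit relations R_i = {(x,y) : y - x ∈ O_i} form a translation association scheme on X.) -/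
/-- Well-definedness of the intersection numbers of the orbit scheme.
If `G` acts additively on the finite abelian group `X` with every orbit closed under
negation, `O_i = orbit G u`, `O_j = orbit G v`, and `y - x`, `y' - x'` lie in the same
`G`-orbit, then
`#{z : z - x ∈ O_i ∧ y - z ∈ O_j} = #{z : z - x' ∈ O_i ∧ y' - z ∈ O_j}`. -/
theorem stmt1 {G X : Type*} [Group G] [Fintype G] [AddCommGroup X] [Fintype X]
    [MulAction G X]
    (hadd : ∀ (g : G) (x x' : X), g • (x + x') = g • x + g • x')
    (hneg : ∀ (x w : X), w ∈ MulAction.orbit G x → -w ∈ MulAction.orbit G x)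
    (u v : X) (x y x' y' : X)
    (hsame : y' - x' ∈ MulAction.orbit G (y - x)) :
    {z : X | z - x ∈ MulAction.orbit G u ∧ y - z ∈ MulAction.orbit G v}.ncard =
    {z : X | z - x' ∈ MulAction.orbit G u ∧ y' - z ∈ MulAction.orbit G v}.ncard := by
  obtain ⟨g, hg⟩ := hsame
  simp only at hg
  have key : ∀ (h : G) (a b : X), h • (a - b) = h • a - h • b := by
    intro h a b
    have := hadd h (a - b) b
    rw [sub_add_cancel] at this
    exact eq_sub_of_add_eq this.symm
  have horb : ∀ (h : G) (w t : X), t ∈ MulAction.orbit G w → h • t ∈ MulAction.orbit G w := by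
    rintro h w t ⟨k, rfl⟩
    exact ⟨h * k, (mul_smul h k w)⟩
  have hinj : Function.Injective (fun z : X => g • (z - x) + x') := by
    intro a b hab
    simp only at hab
    have := MulAction.injective g (add_right_cancel hab)
    exact sub_left_injective this
  have himg : {z : X | z - x' ∈ MulAction.orbit G u ∧ y' - z ∈ MulAction.orbit G v} =
      (fun z : X => g • (z - x) + x') ''
        {z : X | z - x ∈ MulAction.orbit G u ∧ y - z ∈ MulAction.orbit G v} := by
    ext w
    constructor
    · rintro ⟨h1, h2⟩
      refine ⟨g⁻¹ • (w - x') + x, ⟨?_, ?_⟩, ?_⟩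
      · simpa using horb g⁻¹ u (w - x') h1
      · have hy : y = g⁻¹ • y' - g⁻¹ • x' + x := by
          rw [← key, ← hg, inv_smul_smul]; abel
        have : y - (g⁻¹ • (w - x') + x) = g⁻¹ • (y' - w) := by
          rw [key g⁻¹ (w) x', key g⁻¹ y' w, hy]; abel
        rw [this]
        exact horb g⁻¹ v (y' - w) h2
      · simp only
        rw [add_sub_cancel_right, smul_inv_smul, sub_add_cancel]
    · rintro ⟨z, ⟨h1, h2⟩, rfl⟩
      refine ⟨?_, ?_⟩
      · simpa using horb g u (z - x) h1
      · have hy' : y' = g • y - g • x + x' := by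
          rw [← key, hg]; abel
        have : y' - (g • (z - x) + x') = g • (y - z) := by
          rw [key g z x, key g y z, hy']; abel
        rw [this]
        exact horb g v (y - z) h2
  rw [himg, Set.ncard_image_of_injective _ hinj]
end

section
/- Let X be a finite additive abelian group with an inner product ⟨·,·⟩, and let X_0 = {0}, X_1, …, X_d be a partition of X with each X_i closed under negation. Define matrices E_j by (E_j)_{ab} = |X|^{-1} Σ_{x ∈ X_j} ⟨a,x⟩ · conj(⟨b,x⟩), and adjacency matrices A_i by (A_i)_{ab} = 1 if b - a ∈ X_i and 0 otherwise. Suppose that for each j the function y ↦ Σ_{x ∈ X_j} ⟨y,x⟩ is constant on each X_i, with value q_{ij} on X_i. Then E_j = |X|^{-1} Σ_{i=0}^{d} q_{ij} A_i for every j; in particular, each E_j lies in the ℂ-linear span of A_0, A_1, …, A_d. -/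
/-- With `X`, an inner product `f`, a partition `X_0 = {0}, X_1, …, X_d`
closed under negation, `E_j` and adjacency matrices `A_i` as described, if
`y ↦ ∑_{x ∈ X_j} ⟨y,x⟩` is constant with value `q_{ij}` on each `X_i`, then
`E_j = |X|⁻¹ ∑_i q_{ij} A_i`; in particular `E_j` lies in the span of the `A_i`. -/
theorem stmt6 {X : Type*} [AddCommGroup X] [Fintype X] [DecidableEq X]
    (f : X → X → ℂˣ)
    (hsymm : ∀ x y : X, f x y = f y x)
    (hmul : ∀ x y z : X, f x (y + z) = f x y * f x z)
    (hnd : ∀ y z : X, (∀ x : X, f x y = f x z) → y = z)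
    (d : ℕ) (Xs : Fin (d + 1) → Finset X)
    (hzero : Xs 0 = {0})
    (hne : ∀ i, (Xs i).Nonempty)
    (hpart : ∀ x : X, ∃! i, x ∈ Xs i)
    (hclosed : ∀ i, ∀ x ∈ Xs i, -x ∈ Xs i)
    (E : Fin (d + 1) → Matrix X X ℂ)
    (hE : ∀ j a b, E j a b =
      (Fintype.card X : ℂ)⁻¹ * ∑ x ∈ Xs j, (f a x : ℂ) * star ((f b x : ℂˣ) : ℂ))
    (A : Fin (d + 1) → Matrix X X ℂ)
    (hA : ∀ i a b, A i a b = if b - a ∈ Xs i then 1 else 0)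
    (q : Fin (d + 1) → Fin (d + 1) → ℂ)
    (hq : ∀ i j, ∀ y ∈ Xs i, ∑ x ∈ Xs j, ((f y x : ℂˣ) : ℂ) = q i j) :
    ∀ j, E j = (Fintype.card X : ℂ)⁻¹ • ∑ i, q i j • A i ∧
      E j ∈ Submodule.span ℂ (Set.range A) := by
  -- f x 0 = 1
  have h0 : ∀ x : X, f x 0 = 1 := by
    intro x
    have := hmul x 0 0
    rw [add_zero] at this
    exact (left_eq_mul.mp this)
  -- powers
  have hpow : ∀ (x y : X) (n : ℕ), f x (n • y) = (f x y) ^ n := by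
    intro x y n
    induction n with
    | zero => simpa using h0 x
    | succ n ih => rw [succ_nsmul, hmul, ih, pow_succ]
  -- every value has modulus one
  have hnorm : ∀ x y : X, ‖((f x y : ℂˣ) : ℂ)‖ = 1 := by
    intro x y
    have hcard : (Fintype.card X) • y = 0 := card_nsmul_eq_zero
    have h1 : (f x y) ^ (Fintype.card X) = 1 := by
      rw [← hpow, hcard, h0]
    have h2 : (‖((f x y : ℂˣ) : ℂ)‖) ^ (Fintype.card X) = 1 := by
      rw [← norm_pow]
      norm_cast
      rw [h1]
      simp
    have hc : Fintype.card X ≠ 0 := Fintype.card_ne_zero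
    set a := ‖((f x y : ℂˣ) : ℂ)‖ with ha
    have h0a : (0 : ℝ) ≤ a := norm_nonneg _
    rcases lt_trichotomy a 1 with hlt | he | hgt
    · have := pow_lt_one₀ h0a hlt hc
      rw [h2] at this; exact absurd this (lt_irrefl 1)
    · exact he
    · have := one_lt_pow₀ hgt hc
      rw [h2] at this; exact absurd this (lt_irrefl 1)
  -- key pointwise identity
  have key : ∀ a b x : X, (f a x : ℂ) * star ((f b x : ℂˣ) : ℂ)
      = ((f (a - b) x : ℂˣ) : ℂ) := by
    intro a b x
    have hst : star ((f b x : ℂˣ) : ℂ) = (((f b x)⁻¹ : ℂˣ) : ℂ) := by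
      rw [Units.val_inv_eq_inv_val, Complex.inv_eq_conj (hnorm b x)]
      rfl
    have h2 : f x (a - b) * f x b = f x a := by
      rw [← hmul, sub_add_cancel]
    have h3 : f (a - b) x = f a x * (f b x)⁻¹ := by
      rw [hsymm (a - b) x, eq_mul_inv_iff_mul_eq, hsymm a x, ← h2, hsymm x b]
    rw [hst, h3]
    push_cast
    ring
  intro j
  have hEq : E j = (Fintype.card X : ℂ)⁻¹ • ∑ i, q i j • A i := by
    ext a b
    obtain ⟨i, hi, hiu⟩ := hpart (b - a)
    have hab : a - b ∈ Xs i := by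
      have := hclosed i _ hi
      rwa [neg_sub] at this
    have hL : E j a b = (Fintype.card X : ℂ)⁻¹ * q i j := by
      rw [hE]
      congr 1
      rw [← hq i j (a - b) hab]
      exact Finset.sum_congr rfl fun x _ => key a b x
    have hR : (∑ i', q i' j • A i') a b = q i j := by
      rw [Matrix.sum_apply]
      rw [Finset.sum_eq_single i]
      · rw [Matrix.smul_apply, hA, if_pos hi, smul_eq_mul, mul_one]
      · intro i' _ hne'
        rw [Matrix.smul_apply, hA, if_neg (fun h => hne' (hiu i' h)), smul_eq_mul, mul_zero]
      · intro h; exact absurd (Finset.mem_univ i) h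
    rw [hL, Matrix.smul_apply, hR, smul_eq_mul]
  refine ⟨hEq, ?_⟩
  rw [hEq]
  exact Submodule.smul_mem _ _ (Submodule.sum_mem _ fun i _ =>
    Submodule.smul_mem _ _ (Submodule.subset_span ⟨i, rfl⟩))
end

section
/- Let q be a prime power and let X be the additive group of all Hermitian m×m matrices over F_{q²}, i.e., matrices A with *A = A, where (*A)_{ij} = (A_{ji})^q. Then for A, B ∈ X, rank(A) = rank(B) if and only if there exists α ∈ GL(m, q²) with B = *α A α. In other words, the orbits of the action of GL(m,q²) on X given by (α, A) ↦ *α A α are exactly the sets O_i = {A ∈ X : rank(A) = i} for i = 0, 1, …, m. -/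
namespace Stmt14
open Matrix
set_option linter.unusedSectionVars false
set_option maxHeartbeats 1000000
variable {F : Type*} [Field F] [Fintype F] [DecidableEq F]

def cT (σ : F →+* F) {m : ℕ} (M : Matrix (Fin m) (Fin m) F) : Matrix (Fin m) (Fin m) F :=
  (M.map σ)ᵀ

lemma cT_apply (σ : F →+* F) {m : ℕ} (M : Matrix (Fin m) (Fin m) F) (i j : Fin m) :
    cT σ M i j = σ (M j i) := rfl

/-- the permutation (congruence) matrix of `τ` -/
def perm {m : ℕ} (τ : Equiv.Perm (Fin m)) : Matrix (Fin m) (Fin m) F :=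
  Matrix.of fun s t => if s = τ t then 1 else 0

lemma mul_perm {m : ℕ} (M : Matrix (Fin m) (Fin m) F) (τ : Equiv.Perm (Fin m)) (s t : Fin m) :
    (M * (perm τ : Matrix (Fin m) (Fin m) F)) s t = M s (τ t) := by
  simp [perm, Matrix.mul_apply]

lemma cT_perm (σ : F →+* F) {m : ℕ} (τ : Equiv.Perm (Fin m)) :
    cT σ (perm τ : Matrix (Fin m) (Fin m) F) = Matrix.of fun s t => if t = τ s then 1 else 0 := by
  ext s t
  simp [cT_apply, perm, apply_ite σ]

lemma cT_perm_mul (σ : F →+* F) {m : ℕ} (M : Matrix (Fin m) (Fin m) F) (τ : Equiv.Perm (Fin m))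
    (s t : Fin m) : (cT σ (perm τ) * M) s t = M (τ s) t := by
  rw [cT_perm]
  simp [Matrix.mul_apply]

lemma isUnit_perm {m : ℕ} (τ : Equiv.Perm (Fin m)) (hτ : ∀ x, τ (τ x) = x) :
    IsUnit (perm τ : Matrix (Fin m) (Fin m) F) := by
  have h : (perm τ : Matrix (Fin m) (Fin m) F) * perm τ = 1 := by
    ext s t
    rw [mul_perm]
    show (if s = τ (τ t) then (1 : F) else 0) = _
    rw [hτ t]
    simp [Matrix.one_apply]
  exact (Matrix.isUnit_iff_isUnit_det _).mpr (Matrix.isUnit_det_of_right_inverse h)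

lemma cT_transvection (σ : F →+* F) {m : ℕ} {i j : Fin m} (hij : i ≠ j) (c : F) :
    cT σ (Matrix.transvection i j c) = Matrix.transvection j i (σ c) := by
  ext s t
  simp [cT_apply, Matrix.transvection, Matrix.one_apply, Matrix.single_apply,
    apply_ite σ, Matrix.add_apply, and_comm, eq_comm]

lemma cT_mul (σ : F →+* F) {m : ℕ} (M N : Matrix (Fin m) (Fin m) F) :
    cT σ (M * N) = cT σ N * cT σ M := by
  simp only [cT, Matrix.map_mul, Matrix.transpose_mul]

lemma cT_one (σ : F →+* F) {m : ℕ} : cT σ (1 : Matrix (Fin m) (Fin m) F) = 1 := by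
  ext i j
  simp [cT, Matrix.one_apply, apply_ite σ, eq_comm]

/-- key pivot lemma: a nonzero Hermitian matrix is congruent to one with nonzero (0,0) entry -/
lemma pivot (σ : F →+* F) (htr : ∃ μ : F, μ + σ μ ≠ 0) {m : ℕ}
    {A : Matrix (Fin (m + 1)) (Fin (m + 1)) F} (hA : ∀ i j, σ (A j i) = A i j) (hA0 : A ≠ 0) :
    ∃ β : Matrix (Fin (m + 1)) (Fin (m + 1)) F, IsUnit β ∧ (cT σ β * A * β) 0 0 ≠ 0 := by
  obtain ⟨μ, hμ⟩ := htr
  -- first, a congruent matrix with some nonzero diagonal entry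
  have key : ∃ (β : Matrix (Fin (m + 1)) (Fin (m + 1)) F) (i : Fin (m + 1)),
      IsUnit β ∧ (cT σ β * A * β) i i ≠ 0 := by
    by_cases hd : ∃ i, A i i ≠ 0
    · obtain ⟨i, hi⟩ := hd
      refine ⟨1, i, isUnit_one, ?_⟩
      rw [cT_one, Matrix.one_mul, Matrix.mul_one]
      exact hi
    · push_neg at hd
      have hex : ∃ i j, A i j ≠ 0 := by
        by_contra h
        push_neg at h
        exact hA0 (by ext i j; simpa using h i j)
      obtain ⟨i, j, hij⟩ := hex
      have hne : i ≠ j := by rintro rfl; exact hij (hd i)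
      set lam := μ / A i j with hlam
      refine ⟨Matrix.transvection j i lam, i, ?_, ?_⟩
      · exact Matrix.isUnit_iff_isUnit_det _ |>.mpr (by
          rw [Matrix.det_transvection_of_ne _ _ (Ne.symm hne)]; exact isUnit_one)
      · rw [cT_transvection σ (Ne.symm hne), Matrix.mul_assoc]
        rw [Matrix.transvection_mul_apply_same]
        rw [Matrix.mul_transvection_apply_same, Matrix.mul_transvection_apply_same]
        rw [hd i, hd j, zero_add, mul_zero, add_zero]
        have h1 : lam * A i j = μ := div_mul_cancel₀ _ hij
        have h2 : σ lam * A j i = σ μ := by rw [← hA j i, ← _root_.map_mul σ, h1]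
        rw [h1, h2]
        exact hμ
  obtain ⟨β₀, i, hβ₀, hBii⟩ := key
  set B := cT σ β₀ * A * β₀ with hB
  set τ : Equiv.Perm (Fin (m + 1)) := Equiv.swap 0 i with hτdef
  have hτ : ∀ x, τ (τ x) = x := fun x => Equiv.swap_apply_self _ _ x
  refine ⟨β₀ * perm τ, hβ₀.mul (isUnit_perm τ hτ), ?_⟩
  have : cT σ (β₀ * perm τ) * A * (β₀ * perm τ) = cT σ (perm τ) * B * perm τ := by
    rw [cT_mul]
    rw [hB]
    noncomm_ring
  rw [this, Matrix.mul_assoc, cT_perm_mul, mul_perm]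
  simpa [hτdef] using hBii

lemma cT_cT (σ : F →+* F) (hσ : ∀ x, σ (σ x) = x) {m : ℕ} (M : Matrix (Fin m) (Fin m) F) :
    cT σ (cT σ M) = M := by
  ext i j; simp [cT, hσ]

lemma isUnit_cT (σ : F →+* F) {m : ℕ} {M : Matrix (Fin m) (Fin m) F} (h : IsUnit M) :
    IsUnit (cT σ M) := by
  rcases h.exists_right_inv with ⟨N, hN⟩
  have : cT σ N * cT σ M = 1 := by rw [← cT_mul, hN, cT_one]
  exact (Matrix.isUnit_iff_isUnit_det _).mpr (Matrix.isUnit_det_of_left_inverse this)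

lemma herm_congr (σ : F →+* F) (hσ : ∀ x, σ (σ x) = x) {m : ℕ}
    {A : Matrix (Fin m) (Fin m) F} (hA : ∀ i j, σ (A j i) = A i j)
    (β : Matrix (Fin m) (Fin m) F) :
    ∀ i j, σ ((cT σ β * A * β) j i) = (cT σ β * A * β) i j := by
  have hAct : cT σ A = A := by ext i j; exact hA i j
  intro i j
  have h : cT σ (cT σ β * A * β) = cT σ β * A * β := by
    rw [cT_mul, cT_mul, hAct, cT_cT σ hσ, Matrix.mul_assoc]
  calc σ ((cT σ β * A * β) j i) = cT σ (cT σ β * A * β) i j := rfl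
    _ = (cT σ β * A * β) i j := by rw [h]

lemma pivot_one (σ : F →+* F) (hσ : ∀ x, σ (σ x) = x) (htr : ∃ μ : F, μ + σ μ ≠ 0)
    (hnorm : ∀ c : F, c ≠ 0 → σ c = c → ∃ e : F, e ≠ 0 ∧ σ e * e = c) {m : ℕ}
    {A : Matrix (Fin (m + 1)) (Fin (m + 1)) F} (hA : ∀ i j, σ (A j i) = A i j) (hA0 : A ≠ 0) :
    ∃ β : Matrix (Fin (m + 1)) (Fin (m + 1)) F, IsUnit β ∧ (cT σ β * A * β) 0 0 = 1 := by
  obtain ⟨β₀, hβ₀, h00⟩ := pivot σ htr hA hA0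
  set B := cT σ β₀ * A * β₀ with hB
  have hBherm := herm_congr σ hσ hA β₀
  have hfix : σ (B 0 0) = B 0 0 := hBherm 0 0
  obtain ⟨e, he0, hec⟩ := hnorm (B 0 0) h00 hfix
  have hσe : σ e ≠ 0 := by
    intro h
    exact he0 (by rw [← hσ e, h, map_zero])
  set d : Fin (m + 1) → F := fun t => if t = 0 then e⁻¹ else 1 with hd
  set D := Matrix.diagonal d with hD
  have hDunit : IsUnit D := by
    rw [Matrix.isUnit_iff_isUnit_det, hD, Matrix.det_diagonal]
    rw [isUnit_iff_ne_zero, Finset.prod_ne_zero_iff]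
    intro t _
    rw [hd]
    dsimp only
    split
    · exact inv_ne_zero he0
    · exact one_ne_zero
  have hcTD : cT σ D = Matrix.diagonal fun t => σ (d t) := by
    ext i j
    rcases eq_or_ne i j with rfl | h
    · simp [cT_apply, hD]
    · simp [cT_apply, hD, Matrix.diagonal_apply_ne _ h, Matrix.diagonal_apply_ne' _ h]
  refine ⟨β₀ * D, hβ₀.mul hDunit, ?_⟩
  have hrw : cT σ (β₀ * D) * A * (β₀ * D) = cT σ D * B * D := by
    rw [cT_mul, hB]
    noncomm_ring
  rw [hrw, hcTD, Matrix.mul_assoc, hD, Matrix.diagonal_mul, Matrix.mul_diagonal]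
  rw [hd]
  dsimp only
  rw [if_pos rfl, map_inv₀]
  rw [← hec]
  field_simp

/-- embed an `m×m` matrix as lower-right block with a `1` in the corner -/
def emb {m : ℕ} (M : Matrix (Fin m) (Fin m) F) : Matrix (Fin (m + 1)) (Fin (m + 1)) F :=
  Matrix.of (Fin.cons (Fin.cons 1 (fun _ => 0)) (fun i => Fin.cons 0 (M i)))

@[simp] lemma emb_zero_zero {m : ℕ} (M : Matrix (Fin m) (Fin m) F) : emb M 0 0 = 1 := rfl
@[simp] lemma emb_zero_succ {m : ℕ} (M : Matrix (Fin m) (Fin m) F) (j : Fin m) :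
    emb M 0 j.succ = 0 := rfl
@[simp] lemma emb_succ_zero {m : ℕ} (M : Matrix (Fin m) (Fin m) F) (i : Fin m) :
    emb M i.succ 0 = 0 := by simp [emb]
@[simp] lemma emb_succ_succ {m : ℕ} (M : Matrix (Fin m) (Fin m) F) (i j : Fin m) :
    emb M i.succ j.succ = M i j := by simp [emb]

lemma emb_mul {m : ℕ} (M N : Matrix (Fin m) (Fin m) F) : emb M * emb N = emb (M * N) := by
  ext i j
  induction i using Fin.cases with
  | zero =>
    induction j using Fin.cases with
    | zero => simp [Matrix.mul_apply, Fin.sum_univ_succ]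
    | succ j => simp [Matrix.mul_apply, Fin.sum_univ_succ]
  | succ i =>
    induction j using Fin.cases with
    | zero => simp [Matrix.mul_apply, Fin.sum_univ_succ]
    | succ j => simp [Matrix.mul_apply, Fin.sum_univ_succ]

@[simp] lemma emb_one {m : ℕ} : emb (1 : Matrix (Fin m) (Fin m) F) = 1 := by
  ext i j
  induction i using Fin.cases with
  | zero => induction j using Fin.cases with
    | zero => simp [Matrix.one_apply]
    | succ j => simp [Matrix.one_apply, (Fin.succ_ne_zero j).symm]
  | succ i => induction j using Fin.cases with
    | zero => simp [Matrix.one_apply, Fin.succ_ne_zero i]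
    | succ j => simp [Matrix.one_apply]

lemma isUnit_emb {m : ℕ} {M : Matrix (Fin m) (Fin m) F} (h : IsUnit M) : IsUnit (emb M) := by
  rcases h.exists_right_inv with ⟨N, hN⟩
  have : emb M * emb N = 1 := by rw [emb_mul, hN, emb_one]
  exact (Matrix.isUnit_iff_isUnit_det _).mpr (Matrix.isUnit_det_of_right_inverse this)

lemma emb_diagonal {m : ℕ} (w : Fin m → F) :
    emb (Matrix.diagonal w) = Matrix.diagonal (Fin.cons 1 w) := by
  ext i j
  induction i using Fin.cases with
  | zero => induction j using Fin.cases with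
    | zero => simp
    | succ j => simp [Matrix.diagonal_apply_ne _ (Fin.succ_ne_zero j).symm]
  | succ i => induction j using Fin.cases with
    | zero => simp [Matrix.diagonal_apply_ne _ (Fin.succ_ne_zero i)]
    | succ j =>
      rcases eq_or_ne i j with rfl | hij
      · simp
      · simp [Matrix.diagonal_apply_ne _ hij, Matrix.diagonal_apply_ne _ (fun h => hij (Fin.succ_injective _ h))]

lemma cT_emb (σ : F →+* F) {m : ℕ} (M : Matrix (Fin m) (Fin m) F) :
    cT σ (emb M) = emb (cT σ M) := by
  ext i j
  induction i using Fin.cases with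
  | zero => induction j using Fin.cases with
    | zero => simp [cT_apply]
    | succ j => simp [cT_apply]
  | succ i => induction j using Fin.cases with
    | zero => simp [cT_apply]
    | succ j => simp [cT_apply]

/-- clearing the first row and column, given a 1 in the corner -/
lemma clear (σ : F →+* F) {m : ℕ}
    {A : Matrix (Fin (m + 1)) (Fin (m + 1)) F} (hA : ∀ i j, σ (A j i) = A i j)
    (h00 : A 0 0 = 1) :
    ∃ (β : Matrix (Fin (m + 1)) (Fin (m + 1)) F) (C : Matrix (Fin m) (Fin m) F),
      IsUnit β ∧ cT σ β * A * β = emb C := by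
  classical
  set γ : Matrix (Fin (m + 1)) (Fin (m + 1)) F :=
    Matrix.of fun s t => if s = t then 1 else if s = 0 then -(A 0 t) else 0 with hγ
  set cγ : Matrix (Fin (m + 1)) (Fin (m + 1)) F :=
    Matrix.of fun s t => if s = t then 1 else if t = 0 then -(A s 0) else 0 with hcγ
  set M : Matrix (Fin (m + 1)) (Fin (m + 1)) F :=
    Matrix.of fun s t => if t = 0 then A s 0 else A s t - A s 0 * A 0 t with hM
  set C : Matrix (Fin m) (Fin m) F :=
    Matrix.of fun i j => A i.succ j.succ - A i.succ 0 * A 0 j.succ with hC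
  have hγunit : IsUnit γ := by
    rw [Matrix.isUnit_iff_isUnit_det]
    have htri : γ.BlockTriangular id := by
      intro i j hlt
      have h1 : i ≠ j := by intro h; subst h; exact lt_irrefl _ hlt
      have h2 : i ≠ 0 := by
        intro h
        subst h
        exact absurd hlt (by simpa using Fin.zero_le j)
      simp [hγ, h1, h2]
    rw [Matrix.det_of_upperTriangular htri]
    have : ∀ i, γ i i = 1 := fun i => by simp [hγ]
    simp [this]
  have hcTγ : cT σ γ = cγ := by
    ext s t
    simp only [cT_apply, hγ, hcγ, Matrix.of_apply]
    rw [apply_ite σ, apply_ite σ, _root_.map_one, _root_.map_zero, map_neg, hA]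
    by_cases h : s = t
    · subst h; simp
    · simp [h, Ne.symm h]
  have hAγ : A * γ = M := by
    ext s t
    rcases eq_or_ne t 0 with rfl | ht
    · have hcol : ∀ k, γ k 0 = if k = 0 then (1 : F) else 0 := by
        intro k
        rcases eq_or_ne k 0 with rfl | hk
        · simp [hγ]
        · simp [hγ, hk]
      simp [Matrix.mul_apply, hcol, hM]
    · have hcol : ∀ k, γ k t = (if k = t then (1 : F) else 0) + (if k = 0 then -(A 0 t) else 0) := by
        intro k
        rcases eq_or_ne k t with rfl | hk
        · simp [hγ, ht]
        · rcases eq_or_ne k 0 with rfl | hk0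
          · simp [hγ, hk, ht]
          · simp [hγ, hk, hk0]
      simp only [Matrix.mul_apply, hcol, mul_add, Finset.sum_add_distrib, mul_ite, mul_one,
        mul_zero, Finset.sum_ite_eq', Finset.mem_univ, if_true, hM, Matrix.of_apply, ht,
        if_false, mul_neg]
      ring
  have hfinal : cγ * M = emb C := by
    ext s t
    induction s using Fin.cases with
    | zero =>
      have hrow : ∀ k, cγ 0 k = if k = 0 then (1 : F) else 0 := by
        intro k
        rcases eq_or_ne k 0 with rfl | hk
        · simp [hcγ]
        · simp [hcγ, Ne.symm hk, hk]
      rw [Matrix.mul_apply]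
      simp only [hrow, ite_mul, one_mul, zero_mul, Finset.sum_ite_eq', Finset.mem_univ, if_true]
      induction t using Fin.cases with
      | zero => simp [hM, h00]
      | succ t => simp [hM, h00, Fin.succ_ne_zero t]
    | succ s =>
      have hrow : ∀ k, cγ s.succ k =
          (if k = s.succ then (1 : F) else 0) + (if k = 0 then -(A s.succ 0) else 0) := by
        intro k
        rcases eq_or_ne k s.succ with rfl | hk
        · simp [hcγ, Fin.succ_ne_zero s]
        · rcases eq_or_ne k 0 with rfl | hk0
          · simp [hcγ, hk, Ne.symm hk, (Fin.succ_ne_zero s)]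
          · simp [hcγ, hk, Ne.symm hk, hk0]
      rw [Matrix.mul_apply]
      simp only [hrow, add_mul, Finset.sum_add_distrib, ite_mul, one_mul, zero_mul, neg_mul,
        Finset.sum_ite_eq', Finset.mem_univ, if_true]
      induction t using Fin.cases with
      | zero => simp [hM, h00, Fin.succ_ne_zero s]
      | succ t => simp [hM, hC, Fin.succ_ne_zero t, Fin.succ_ne_zero s, h00]
  refine ⟨γ, C, hγunit, ?_⟩
  rw [hcTγ, Matrix.mul_assoc, hAγ, hfinal]

lemma diagonalize (σ : F →+* F) (hσ : ∀ x, σ (σ x) = x) (htr : ∃ μ : F, μ + σ μ ≠ 0)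
    (hnorm : ∀ c : F, c ≠ 0 → σ c = c → ∃ e : F, e ≠ 0 ∧ σ e * e = c) :
    ∀ (m : ℕ) (A : Matrix (Fin m) (Fin m) F), (∀ i j, σ (A j i) = A i j) →
    ∃ (α : Matrix (Fin m) (Fin m) F) (w : Fin m → F),
      IsUnit α ∧ (∀ i, w i = 0 ∨ w i = 1) ∧ cT σ α * A * α = Matrix.diagonal w := by
  intro m
  induction m with
  | zero =>
    intro A hA
    exact ⟨1, fun _ => 0, isUnit_one, fun i => Or.inl rfl, Subsingleton.elim _ _⟩
  | succ m ih =>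
    intro A hA
    by_cases hA0 : A = 0
    · refine ⟨1, fun _ => 0, isUnit_one, fun i => Or.inl rfl, ?_⟩
      subst hA0
      simp [cT_one]
    · obtain ⟨β₁, hβ₁, h1⟩ := pivot_one σ hσ htr hnorm hA hA0
      have hBherm := herm_congr σ hσ hA β₁
      obtain ⟨β₂, C, hβ₂, h2⟩ := clear σ hBherm h1
      have hCherm : ∀ i j, σ (C j i) = C i j := by
        intro i j
        have h := herm_congr σ hσ hBherm β₂ i.succ j.succ
        rw [h2] at h
        simpa using h
      obtain ⟨δ, w, hδ, hw, h3⟩ := ih C hCherm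
      refine ⟨β₁ * (β₂ * emb δ), Fin.cons 1 w, hβ₁.mul (hβ₂.mul (isUnit_emb hδ)), ?_, ?_⟩
      · intro i
        induction i using Fin.cases with
        | zero => exact Or.inr (by simp)
        | succ i => simpa using hw i
      · have expand : cT σ (β₁ * (β₂ * emb δ)) * A * (β₁ * (β₂ * emb δ))
            = cT σ (emb δ) * (cT σ β₂ * (cT σ β₁ * A * β₁) * β₂) * emb δ := by
          rw [cT_mul, cT_mul]
          noncomm_ring
        rw [expand, h2, cT_emb, emb_mul, emb_mul, h3, emb_diagonal]

lemma isUnit_perm' {m : ℕ} (τ : Equiv.Perm (Fin m)) :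
    IsUnit (perm τ : Matrix (Fin m) (Fin m) F) := by
  have h : (perm τ : Matrix (Fin m) (Fin m) F) * perm τ⁻¹ = 1 := by
    ext s t
    rw [mul_perm]
    show (if s = τ (τ⁻¹ t) then (1 : F) else 0) = _
    rw [show τ (τ⁻¹ t) = t from τ.apply_symm_apply t]
    simp [Matrix.one_apply]
  exact (Matrix.isUnit_iff_isUnit_det _).mpr (Matrix.isUnit_det_of_right_inverse h)

lemma rank_congr (σ : F →+* F) {m : ℕ} (A : Matrix (Fin m) (Fin m) F)
    {α : Matrix (Fin m) (Fin m) F} (hα : IsUnit α) :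
    (cT σ α * A * α).rank = A.rank := by
  rw [Matrix.rank_mul_eq_left_of_isUnit_det α (cT σ α * A)
    ((Matrix.isUnit_iff_isUnit_det α).mp hα)]
  exact Matrix.rank_mul_eq_right_of_isUnit_det _ _
    ((Matrix.isUnit_iff_isUnit_det _).mp (isUnit_cT σ hα))

lemma congr_inv (σ : F →+* F) {m : ℕ} {M N α : Matrix (Fin m) (Fin m) F} (hα : IsUnit α)
    (h : cT σ α * M * α = N) : ∃ α', IsUnit α' ∧ cT σ α' * N * α' = M := by
  obtain ⟨u, rfl⟩ := hα
  refine ⟨↑u⁻¹, Units.isUnit _, ?_⟩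
  rw [← h]
  have h1 : cT σ (↑u⁻¹ : Matrix (Fin m) (Fin m) F) * cT σ (↑u : Matrix (Fin m) (Fin m) F) = 1 := by
    rw [← cT_mul, Units.mul_inv, cT_one]
  calc cT σ ↑u⁻¹ * (cT σ ↑u * M * ↑u) * ↑u⁻¹
      = (cT σ ↑u⁻¹ * cT σ ↑u) * M * (↑u * ↑u⁻¹) := by noncomm_ring
    _ = M := by rw [h1, Units.mul_inv, Matrix.one_mul, Matrix.mul_one]

lemma diag_perm_congr (σ : F →+* F) (hσ01 : σ 1 = 1) {m : ℕ} (wA wB : Fin m → F)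
    (τ : Equiv.Perm (Fin m)) (hmatch : ∀ t, wA (τ t) = wB t) :
    cT σ (perm τ) * Matrix.diagonal wA * perm τ = Matrix.diagonal wB := by
  ext s t
  rw [Matrix.mul_assoc, cT_perm_mul, mul_perm]
  rcases eq_or_ne s t with rfl | h
  · rw [Matrix.diagonal_apply_eq, Matrix.diagonal_apply_eq, hmatch]
  · rw [Matrix.diagonal_apply_ne _ h, Matrix.diagonal_apply_ne _ (fun hc => h (τ.injective hc))]

/-- the field-theoretic facts needed, packaged -/
lemma field_facts {F : Type*} [Field F] [Fintype F] [DecidableEq F]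
    (p k q : ℕ) (hp : p.Prime) (hk : 0 < k) (hq : q = p ^ k)
    (hcard : Fintype.card F = q ^ 2) :
    ∃ σ : F →+* F, (∀ x : F, σ x = x ^ q) ∧ (∀ x, σ (σ x) = x) ∧
      (∃ μ : F, μ + σ μ ≠ 0) ∧
      (∀ c : F, c ≠ 0 → σ c = c → ∃ e : F, e ≠ 0 ∧ σ e * e = c) := by
  have hq2 : 2 ≤ q := by
    have h1 : p ≤ p ^ k := Nat.le_self_pow (by omega) p
    have := hp.two_le
    omega
  have hq0 : q ≠ 0 := by omega
  -- the characteristic of F is p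
  haveI hfp : Fact p.Prime := ⟨hp⟩
  haveI hcharF : CharP F p := by
    haveI : CharP F (ringChar F) := ringChar.charP F
    obtain ⟨n, hrprime, hcard'⟩ := FiniteField.card F (ringChar F)
    have hpq : Fintype.card F = p ^ (2 * k) := by
      rw [hcard, hq, ← pow_mul, mul_comm]
    have hdvd : p ∣ ringChar F ^ (n : ℕ) := by
      rw [← hcard', hpq]
      exact dvd_pow_self p (by omega)
    have : p ∣ ringChar F := hp.dvd_of_dvd_pow hdvd
    have heq : p = ringChar F := ((Nat.prime_dvd_prime_iff_eq hp hrprime).mp this)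
    rw [heq]
    exact ringChar.charP F
  have hadd : ∀ x y : F, (x + y) ^ q = x ^ q + y ^ q := by
    intro x y
    rw [hq]
    exact add_pow_char_pow x y p k
  refine ⟨⟨⟨⟨fun x => x ^ q, one_pow q⟩, fun x y => mul_pow x y q⟩,
    zero_pow hq0, hadd⟩, fun x => rfl, ?_, ?_, ?_⟩
  · -- involution
    intro x
    show (x ^ q) ^ q = x
    rw [← pow_mul]
    have hqq : q * q = Fintype.card F := by rw [hcard]; ring
    rw [hqq]
    exact FiniteField.pow_card x
  · -- trace nonzero
    show ∃ μ : F, μ + μ ^ q ≠ 0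
    by_contra hcon
    push_neg at hcon
    have hone : (1 : F) + 1 = 0 := by simpa using hcon 1
    have hneg : ∀ y : F, -y = y := fun y => by linear_combination (-y) * hone
    have hfix : ∀ y : F, y ^ q = y := by
      intro y
      have h2 : y ^ q = -y := by linear_combination hcon y
      rw [h2, hneg]
    -- generator of the unit group
    obtain ⟨g, hg⟩ := IsCyclic.exists_generator (α := Fˣ)
    have horder : orderOf g = q ^ 2 - 1 := by
      rw [orderOf_eq_card_of_forall_mem_zpowers hg, Nat.card_eq_fintype_card,
        Fintype.card_units, hcard]
    have hgq : g ^ q = g ^ 1 := by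
      apply Units.ext
      rw [pow_one, Units.val_pow_eq_pow_val]
      exact hfix _
    have hmod := (pow_eq_pow_iff_modEq).mp hgq
    rw [horder] at hmod
    have hdvd : (q ^ 2 - 1) ∣ (q - 1) := (Nat.modEq_iff_dvd' (by omega)).mp hmod.symm
    have hle : q ^ 2 - 1 ≤ q - 1 := Nat.le_of_dvd (by omega) hdvd
    have hqsq : q ^ 2 = q * q := sq q
    have hqq : q * q ≥ 2 * q := Nat.mul_le_mul_right q (by omega)
    omega
  · -- norm surjectivity onto fixed elements
    intro c hc hfixc
    obtain ⟨g, hg⟩ := IsCyclic.exists_generator (α := Fˣ)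
    have horder : orderOf g = q ^ 2 - 1 := by
      rw [orderOf_eq_card_of_forall_mem_zpowers hg, Nat.card_eq_fintype_card,
        Fintype.card_units, hcard]
    set u : Fˣ := Units.mk0 c hc with hu
    obtain ⟨t, ht⟩ : ∃ t : ℕ, g ^ t = u := by
      have := hg u
      rwa [← mem_powers_iff_mem_zpowers, Submonoid.mem_powers_iff] at this
    have hgt : g ^ (t * q) = g ^ t := by
      rw [pow_mul, ht]
      apply Units.ext
      rw [Units.val_pow_eq_pow_val]
      exact hfixc
    have hmod := (pow_eq_pow_iff_modEq).mp hgt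
    rw [horder] at hmod
    have hdvd : (q ^ 2 - 1) ∣ (t * q - t) := (Nat.modEq_iff_dvd' (Nat.le_mul_of_pos_right t (by omega))).mp hmod.symm
    have hsub : t * q - t = t * (q - 1) := by
      have h1 : t * (q - 1) + t = t * q := by
        calc t * (q - 1) + t = t * ((q - 1) + 1) := by ring
          _ = t * q := by rw [Nat.sub_add_cancel (by omega)]
      omega
    have hfact : q ^ 2 - 1 = (q + 1) * (q - 1) := by
      have h1 : (q + 1) * (q - 1) + 1 = q * q := by
        rcases Nat.exists_eq_add_of_le hq2 with ⟨r, rfl⟩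
        have h2 : 2 + r - 1 = 1 + r := by omega
        rw [h2]
        ring
      have hqsq : q ^ 2 = q * q := sq q
      omega
    rw [hsub, hfact] at hdvd
    have hdvd2 : (q + 1) ∣ t := by
      have := (mul_dvd_mul_iff_right (show (q - 1 : ℕ) ≠ 0 by omega)).mp hdvd
      exact this
    obtain ⟨s, hs⟩ := hdvd2
    refine ⟨↑(g ^ s), Units.ne_zero _, ?_⟩
    show (↑(g ^ s) : F) ^ q * ↑(g ^ s) = c
    have hval : (↑(g ^ s) : F) ^ q * ↑(g ^ s) = ↑((g ^ s) ^ q * g ^ s) := by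
      push_cast
      ring
    have hgrp : (g ^ s) ^ q * g ^ s = g ^ t := by
      rw [← pow_mul, ← pow_add, hs]
      congr 1
      ring
    rw [hval, hgrp, ht, hu]
    rfl

end Stmt14



/-- Let `q = p^k` be a prime power and `F` a field with `q²` elements,
with conjugation `x ↦ x^q`. For Hermitian `m×m` matrices `A, B` over `F`
(`(A_{ji})^q = A_{ij}`), `rank A = rank B` iff there is `α ∈ GL(m,q²)` with
`B = *α A α`, where `(*α)_{ij} = (α_{ji})^q`; i.e., the orbits of the
`GL(m,q²)`-action `(α, A) ↦ *α A α` on Hermitian matrices are the fixed-rank sets. -/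
theorem stmt14 {F : Type*} [Field F] [Fintype F] [DecidableEq F]
    (p k q : ℕ) (hp : p.Prime) (hk : 0 < k) (hq : q = p ^ k)
    (hcard : Fintype.card F = q ^ 2)
    (m : ℕ) (A B : Matrix (Fin m) (Fin m) F)
    (hA : ∀ i j, (A j i) ^ q = A i j) (hB : ∀ i j, (B j i) ^ q = B i j) :
    A.rank = B.rank ↔
      ∃ α : Matrix (Fin m) (Fin m) F, IsUnit α ∧
        B = (Matrix.of fun i j => (α j i) ^ q) * A * α := by
  classical
  obtain ⟨σ, hσdef, hσ, htr, hnorm⟩ := Stmt14.field_facts p k q hp hk hq hcard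
  have hAh : ∀ i j, σ (A j i) = A i j := fun i j => by rw [hσdef]; exact hA i j
  have hBh : ∀ i j, σ (B j i) = B i j := fun i j => by rw [hσdef]; exact hB i j
  have hcTeq : ∀ α : Matrix (Fin m) (Fin m) F,
      (Matrix.of fun i j => (α j i) ^ q) = Stmt14.cT σ α := by
    intro α
    ext i j
    rw [Stmt14.cT_apply, hσdef]
    rfl
  constructor
  · intro hrank
    obtain ⟨αA, wA, hαA, hwA, hdA⟩ := Stmt14.diagonalize σ hσ htr hnorm m A hAh
    obtain ⟨αB, wB, hαB, hwB, hdB⟩ := Stmt14.diagonalize σ hσ htr hnorm m B hBh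
    have hrA : (Matrix.diagonal wA).rank = A.rank := by
      rw [← hdA]; exact Stmt14.rank_congr σ A hαA
    have hrB : (Matrix.diagonal wB).rank = B.rank := by
      rw [← hdB]; exact Stmt14.rank_congr σ B hαB
    have hcardeq : Fintype.card {i // wB i ≠ 0} = Fintype.card {i // wA i ≠ 0} := by
      have h1 := Matrix.rank_diagonal wA
      have h2 := Matrix.rank_diagonal wB
      rw [← h1, ← h2, hrA, hrB, hrank]
    set e := Fintype.equivOfCardEq hcardeq with he
    set π := e.extendSubtype with hπ
    have hmatch : ∀ t, wA (π t) = wB t := by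
      intro t
      by_cases h : wB t ≠ 0
      · have h1 : wA (π t) ≠ 0 := e.extendSubtype_mem t h
        have h2 : wA (π t) = 1 := ((hwA (π t)).resolve_left h1)
        have h3 : wB t = 1 := ((hwB t).resolve_left h)
        rw [h2, h3]
      · push_neg at h
        have h1 : ¬ (wA (π t) ≠ 0) := e.extendSubtype_not_mem t (by simpa using h)
        push_neg at h1
        rw [h1, h]
    have hdiag : Stmt14.cT σ (Stmt14.perm π) * Matrix.diagonal wA * Stmt14.perm π
        = Matrix.diagonal wB := Stmt14.diag_perm_congr σ (map_one σ) wA wB π hmatch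
    have hcomb : Stmt14.cT σ (αA * Stmt14.perm π) * A * (αA * Stmt14.perm π)
        = Matrix.diagonal wB := by
      rw [Stmt14.cT_mul]
      have hre : Stmt14.cT σ (Stmt14.perm π) * Stmt14.cT σ αA * A * (αA * Stmt14.perm π)
          = Stmt14.cT σ (Stmt14.perm π) * (Stmt14.cT σ αA * A * αA) * Stmt14.perm π := by
        noncomm_ring
      rw [hre, hdA, hdiag]
    obtain ⟨α', hα', hinv⟩ := Stmt14.congr_inv σ hαB hdB
    refine ⟨(αA * Stmt14.perm π) * α', (hαA.mul (Stmt14.isUnit_perm' π)).mul hα', ?_⟩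
    rw [hcTeq, Stmt14.cT_mul]
    have hre2 : Stmt14.cT σ α' * Stmt14.cT σ (αA * Stmt14.perm π) * A
          * (αA * Stmt14.perm π * α')
        = Stmt14.cT σ α' * (Stmt14.cT σ (αA * Stmt14.perm π) * A * (αA * Stmt14.perm π)) * α' := by
      noncomm_ring
    rw [hre2, hcomb, hinv]
  · rintro ⟨α, hα, rfl⟩
    rw [hcTeq α]
    exact (Stmt14.rank_congr σ A hα).symm
end

section
/- Let F_q be a finite field and n a positive integer. A linear automorphism φ of F_q^n preserves the Hamming weight (i.e., w_H(φu) = w_H(u) for all u ∈ F_q^n) if and only if φ is a monomial transformation, that is, there exist a permutation σ ∈ S_n and α = (α_1, …, α_n) ∈ (F_qˣ)^n such that φ(x_1, …, x_n) = (α_1 x_{σ^{-1}(1)}, …, α_n x_{σ^{-1}(n)}) for all x ∈ F_q^n. Consequently, the orbits of the group Aut(F_q^n, w_H) of Hamming-weight-preserving linear automorphisms acting on F_q^n are exactly the spheres O_i = {x ∈ F_q^n : w_H(x) = i}, i = 0, 1, …, n. -/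
/-- The Hamming weight of a vector: the number of nonzero coordinates. -/
def hammingWt {F : Type*} [DecidableEq F] [Zero F] {n : ℕ} (x : Fin n → F) : ℕ :=
  (Finset.univ.filter fun i => x i ≠ 0).card

section
variable {F : Type*} [Field F] [DecidableEq F] {n : ℕ}

def monomialEquiv (σ : Equiv.Perm (Fin n)) (α : Fin n → Fˣ) :
    (Fin n → F) ≃ₗ[F] (Fin n → F) where
  toFun x i := (α i : F) * x (σ⁻¹ i)
  invFun y j := ((α (σ j))⁻¹ : Fˣ) * y (σ j)
  map_add' x y := by funext i; simp [mul_add]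
  map_smul' c x := by funext i; simp [Pi.smul_apply, smul_eq_mul]; ring
  left_inv x := by funext j; simp
  right_inv y := by funext i; simp [Equiv.apply_symm_apply, Units.mul_inv_cancel_left]

lemma monomial_wt (σ : Equiv.Perm (Fin n)) (α : Fin n → Fˣ) (x : Fin n → F) :
    hammingWt (fun i => (α i : F) * x (σ⁻¹ i)) = hammingWt x := by
  unfold hammingWt
  apply Finset.card_nbij' (i := fun i => σ⁻¹ i) (j := fun j => σ j) <;>
    simp [Units.mul_right_eq_zero, Set.MapsTo, Set.LeftInvOn, Set.RightInvOn]

lemma wt_single (j : Fin n) (c : F) (hc : c ≠ 0) : hammingWt (Pi.single j c) = 1 := by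
  unfold hammingWt
  have h : (Finset.univ.filter fun i => (Pi.single j c : Fin n → F) i ≠ 0) = {j} := by
    ext i
    rcases eq_or_ne i j with rfl | h
    · simp [hc]
    · simp [Pi.single_apply, h]
  rw [h]
  simp

-- weight-1 vectors are supported at a single index
lemma wt_one_struct (v : Fin n → F) (hv : hammingWt v = 1) :
    ∃ i, v i ≠ 0 ∧ ∀ k, k ≠ i → v k = 0 := by
  unfold hammingWt at hv
  obtain ⟨a, ha⟩ := Finset.card_eq_one.mp hv
  refine ⟨a, ?_, fun k hk => ?_⟩
  · have : a ∈ Finset.univ.filter fun i => v i ≠ 0 := ha ▸ Finset.mem_singleton_self a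
    simpa using this
  · by_contra h
    have : k ∈ Finset.univ.filter fun i => v i ≠ 0 := by simpa using h
    rw [ha] at this
    exact hk (Finset.mem_singleton.mp this)

theorem fwd (φ : (Fin n → F) ≃ₗ[F] (Fin n → F))
    (hφ : ∀ u : Fin n → F, hammingWt (φ u) = hammingWt u) :
    ∃ (σ : Equiv.Perm (Fin n)) (α : Fin n → Fˣ),
      ∀ (x : Fin n → F) (i : Fin n), φ x i = (α i : F) * x (σ⁻¹ i) := by
  have h1 : ∀ j : Fin n, ∃ i, φ (Pi.single j 1) i ≠ 0 ∧
      ∀ k, k ≠ i → φ (Pi.single j 1) k = 0 := by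
    intro j
    exact wt_one_struct _ (by rw [hφ]; exact wt_single j 1 one_ne_zero)
  choose τ hne hz using h1
  have hinj : Function.Injective τ := by
    intro j k hjk
    by_contra hne'
    set a := φ (Pi.single j 1) (τ j) with ha
    set b := φ (Pi.single k 1) (τ k) with hb
    have key : φ (b • (Pi.single j 1 : Fin n → F) - a • (Pi.single k 1 : Fin n → F)) = 0 := by
      rw [map_sub, map_smul, map_smul]
      funext m
      rcases eq_or_ne m (τ j) with rfl | hm
      · simp only [Pi.sub_apply, Pi.smul_apply, smul_eq_mul, Pi.zero_apply]
        rw [← hjk] at hb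
        rw [← ha, ← hb]; ring
      · simp [hz j m hm, hz k m (hjk ▸ hm)]
    have h0 : b • (Pi.single j 1 : Fin n → F) - a • (Pi.single k 1 : Fin n → F) = (0 : Fin n → F) := by
      exact φ.injective (key.trans (map_zero φ).symm)
    have : b = 0 := by
      have := congrFun h0 j
      simpa [Pi.single_apply, Ne.symm hne'] using this
    exact hne k this
  have hbij : Function.Bijective τ := Finite.injective_iff_bijective.mp hinj
  set σ : Equiv.Perm (Fin n) := Equiv.ofBijective τ hbij with hσ
  have hστ : ∀ j, σ j = τ j := fun j => rfl
  have hαne : ∀ i : Fin n, φ (Pi.single (σ⁻¹ i) 1) i ≠ 0 := by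
    intro i
    have hτ : τ (σ⁻¹ i) = i := by rw [← hστ]; exact σ.apply_symm_apply i
    have h2 := hne (σ⁻¹ i)
    rwa [hτ] at h2
  refine ⟨σ, fun i => Units.mk0 _ (hαne i), fun x i => ?_⟩
  have hx : x = ∑ j, x j • (Pi.single j 1 : Fin n → F) := by
    funext m; simp [Pi.single_apply]
  conv_lhs => rw [hx]
  rw [map_sum]
  simp only [map_smul]
  rw [Finset.sum_apply]
  rw [Finset.sum_eq_single (σ⁻¹ i)]
  · simp [Units.val_mk0, mul_comm]
  · intro j _ hj
    have : i ≠ τ j := by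
      intro h; apply hj
      have : σ j = i := (hστ j).trans h.symm
      rw [← this]; exact (σ.symm_apply_apply j).symm
    simp [hz j i this]
  · simp

theorem part2 (x y : Fin n → F) (h : hammingWt x = hammingWt y) :
    ∃ (σ : Equiv.Perm (Fin n)) (α : Fin n → Fˣ),
      ∀ i : Fin n, (α i : F) * x (σ⁻¹ i) = y i := by
  have he : Fintype.card {i // x i ≠ 0} = Fintype.card {i // y i ≠ 0} := by
    rw [Fintype.card_subtype, Fintype.card_subtype]; exact h
  have hf : Fintype.card {i // ¬ x i ≠ 0} = Fintype.card {i // ¬ y i ≠ 0} := by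
    have h1 := Fintype.card_subtype_compl (fun i => x i ≠ 0)
    have h2 := Fintype.card_subtype_compl (fun i => y i ≠ 0)
    omega
  set e := Fintype.equivOfCardEq he
  set f := Fintype.equivOfCardEq hf
  set σ : Equiv.Perm (Fin n) := Equiv.subtypeCongr e f with hσdef
  have key : ∀ j, x j ≠ 0 ↔ y (σ j) ≠ 0 := by
    intro j
    by_cases hj : x j ≠ 0
    · have hs : σ j = (e ⟨j, hj⟩ : Fin n) := by simp [hσdef, Equiv.subtypeCongr, hj]
      rw [hs]
      exact iff_of_true hj (e ⟨j, hj⟩).2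
    · have hs : σ j = (f ⟨j, hj⟩ : Fin n) := by simp [hσdef, Equiv.subtypeCongr, hj]
      rw [hs]
      exact iff_of_false hj (f ⟨j, hj⟩).2
  have key' : ∀ i, y i ≠ 0 ↔ x (σ⁻¹ i) ≠ 0 := by
    intro i
    have := key (σ⁻¹ i)
    simp only [Equiv.Perm.coe_inv, Equiv.apply_symm_apply] at this
    exact this.symm
  refine ⟨σ, fun i => if h : y i ≠ 0 then
      Units.mk0 (y i * (x (σ⁻¹ i))⁻¹) (mul_ne_zero h (inv_ne_zero ((key' i).mp h)))
    else 1, fun i => ?_⟩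
  by_cases hi : y i ≠ 0
  · have hx : x (σ⁻¹ i) ≠ 0 := (key' i).mp hi
    simp only [dif_pos hi, Units.val_mk0]
    rw [mul_assoc, inv_mul_cancel₀ hx, mul_one]
  · have hx : x (σ⁻¹ i) = 0 := by
      by_contra hx
      exact hi ((key' i).mpr hx)
    push_neg at hi
    simp [hi, show x (σ.symm i) = 0 from hx]
end

/-- A linear automorphism `φ` of `F_q^n` preserves the Hamming weight
iff it is a monomial transformation `φ(x)_i = α_i x_{σ⁻¹(i)}` for some permutation
`σ` and units `α_i`. Consequently the orbits of the group of Hamming-weight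
preserving linear automorphisms are exactly the Hamming spheres. -/
theorem stmt16 {F : Type*} [Field F] [Fintype F] [DecidableEq F] (n : ℕ) :
    (∀ φ : (Fin n → F) ≃ₗ[F] (Fin n → F),
      (∀ u : Fin n → F, hammingWt (φ u) = hammingWt u) ↔
        ∃ (σ : Equiv.Perm (Fin n)) (α : Fin n → Fˣ),
          ∀ (x : Fin n → F) (i : Fin n), φ x i = (α i : F) * x (σ⁻¹ i)) ∧
    (∀ x y : Fin n → F,
      hammingWt x = hammingWt y ↔
        ∃ φ : (Fin n → F) ≃ₗ[F] (Fin n → F),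
          (∀ u : Fin n → F, hammingWt (φ u) = hammingWt u) ∧ φ x = y) := by
  constructor
  · intro φ
    constructor
    · exact fwd φ
    · rintro ⟨σ, α, hφ⟩ u
      have : φ u = fun i => (α i : F) * u (σ⁻¹ i) := funext (hφ u)
      rw [this]
      exact monomial_wt σ α u
  · intro x y
    constructor
    · intro h
      obtain ⟨σ, α, hσ⟩ := part2 x y h
      exact ⟨monomialEquiv σ α, fun u => monomial_wt σ α u, funext hσ⟩
    · rintro ⟨φ, hφ, rfl⟩
      exact (hφ x).symm
end

section
/- Let F_q be a finite field, n_1, …, n_t positive integers, n = n_1 + ⋯ + n_t, and identify F_q^n with F_q^{n_1} × ⋯ × F_q^{n_t} by blocks of coordinates; for 1 ≤ s ≤ t let block s denote the index set {n_1+⋯+n_{s-1}+1, …, n_1+⋯+n_{s-1}+n_s}, and let e_1, …, e_n be the standard basis. A linear automorphism g of F_q^n preserves the weak-order-poset weight w_{P₀} (i.e., w_{P₀}(gu) = w_{P₀}(u) for all u) if and only if for each 1 ≤ s ≤ t there is a permutation ρ_s of block s such that for every i in block s, g(e_i) = a_i e_{ρ_s(i)} + Σ_{l=1}^{n_1+⋯+n_{s-1}}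 b_{li} e_l for some a_i ∈ F_qˣ and b_{li} ∈ F_q. -/
section aux
variable {t : ℕ} {ns S : Fin t → ℕ}

lemma stmt17aux_mono (hS : ∀ s, S s = ∑ i : Fin t, if i < s then ns i else 0)
    {s s' : Fin t} (h : s < s') : S s + ns s ≤ S s' := by
  rw [hS, hS]
  have h1 : ns s = ∑ i : Fin t, if i = s then ns i else 0 := by
    rw [Finset.sum_ite_eq' Finset.univ s ns]; simp
  rw [h1, ← Finset.sum_add_distrib]
  apply Finset.sum_le_sum
  intro i _
  by_cases hi : i < s
  · simp [hi, lt_trans hi h, hi.ne]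
  · by_cases hi2 : i = s
    · subst hi2; simp [h, lt_irrefl]
    · simp [hi, hi2]

lemma stmt17aux_mono' (hS : ∀ s, S s = ∑ i : Fin t, if i < s then ns i else 0)
    {s s' : Fin t} (h : s ≤ s') : S s ≤ S s' := by
  rw [hS, hS]
  apply Finset.sum_le_sum
  intro i _
  by_cases hi : i < s
  · simp [hi, lt_of_lt_of_le hi h]
  · simp [hi]

lemma stmt17aux_succ (hS : ∀ s, S s = ∑ i : Fin t, if i < s then ns i else 0)
    {s s' : Fin t} (h : (s : ℕ) + 1 = (s' : ℕ)) : S s' = S s + ns s := by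
  rw [hS, hS]
  have h1 : ns s = ∑ i : Fin t, if i = s then ns i else 0 := by
    rw [Finset.sum_ite_eq' Finset.univ s ns]; simp
  rw [h1, ← Finset.sum_add_distrib]
  apply Finset.sum_congr rfl
  intro i _
  by_cases hi : i < s
  · have hi' : i < s' := by rw [Fin.lt_def] at *; omega
    simp [hi, hi', hi.ne]
  · by_cases hi2 : i = s
    · subst hi2
      have hi' : i < s' := by rw [Fin.lt_def]; omega
      simp [hi', lt_irrefl]
    · have hv : (i : ℕ) ≠ (s : ℕ) := fun hh => hi2 (Fin.ext hh)
      have hi' : ¬ i < s' := by rw [Fin.lt_def] at *; omega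
      simp [hi, hi2, hi']

lemma stmt17aux_last (hS : ∀ s, S s = ∑ i : Fin t, if i < s then ns i else 0)
    {n : ℕ} (hn : n = ∑ s, ns s) {s : Fin t} (h : (s : ℕ) + 1 = t) :
    S s + ns s = n := by
  rw [hS, hn]
  have h1 : ns s = ∑ i : Fin t, if i = s then ns i else 0 := by
    rw [Finset.sum_ite_eq' Finset.univ s ns]; simp
  rw [h1, ← Finset.sum_add_distrib]
  apply Finset.sum_congr rfl
  intro i _
  by_cases hi : i < s
  · simp [hi, hi.ne]
  · by_cases hi2 : i = s
    · subst hi2; simp [lt_irrefl]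
    · exfalso
      have hv : (i : ℕ) ≠ (s : ℕ) := fun hh => hi2 (Fin.ext hh)
      have := i.isLt
      rw [Fin.lt_def] at hi
      omega

lemma stmt17aux_unique (hS : ∀ s, S s = ∑ i : Fin t, if i < s then ns i else 0)
    {s s' : Fin t} {m : ℕ} (h1 : S s ≤ m) (h2 : m < S s + ns s)
    (h1' : S s' ≤ m) (h2' : m < S s' + ns s') : s = s' := by
  rcases lt_trichotomy s s' with h | h | h
  · have := stmt17aux_mono hS h; omega
  · exact h
  · have := stmt17aux_mono hS h; omega

lemma stmt17aux_exists (hS : ∀ s, S s = ∑ i : Fin t, if i < s then ns i else 0)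
    {n : ℕ} (hn : n = ∑ s, ns s) (l : Fin n) :
    ∃ s : Fin t, S s ≤ (l : ℕ) ∧ (l : ℕ) < S s + ns s := by
  have hn0 : 0 < n := l.pos
  have ht : 0 < t := by
    rcases Nat.eq_zero_or_pos t with h | h
    · subst h; simp at hn; omega
    · exact h
  classical
  set A := Finset.univ.filter fun s : Fin t => S s ≤ (l : ℕ) with hA
  have hAne : A.Nonempty := by
    refine ⟨⟨0, ht⟩, ?_⟩
    simp only [hA, Finset.mem_filter, Finset.mem_univ, true_and]
    rw [hS]
    have : ∀ i : Fin t, ¬ i < (⟨0, ht⟩ : Fin t) := by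
      intro i; simp [Fin.lt_def]
    simp [this]
  set s := A.max' hAne with hsdef
  have hs1 : S s ≤ (l : ℕ) := by
    have := A.max'_mem hAne
    simp only [hA, Finset.mem_filter, Finset.mem_univ, true_and] at this
    exact this
  refine ⟨s, hs1, ?_⟩
  by_contra hcon
  push_neg at hcon
  by_cases hlast : (s : ℕ) + 1 < t
  · set s' : Fin t := ⟨(s : ℕ) + 1, hlast⟩ with hs'
    have he : S s' = S s + ns s := stmt17aux_succ hS rfl
    have hmem : s' ∈ A := by
      rw [hA]; simp only [Finset.mem_filter, Finset.mem_univ, true_and]; omega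
    have hle := A.le_max' s' hmem
    rw [← hsdef] at hle
    rw [Fin.le_def] at hle
    simp [hs'] at hle
  · have hlast' : (s : ℕ) + 1 = t := by have := s.isLt; omega
    have := stmt17aux_last hS hn hlast'
    have := l.isLt
    omega

lemma stmt17aux_card {n : ℕ} (P : Fin n → Prop) [DecidablePred P] (A m : ℕ) :
    (Finset.univ.filter fun l : Fin n => P l ∧ A ≤ (l : ℕ) ∧ (l : ℕ) < A + m).card ≤ m := by
  have h := Finset.card_le_card_of_injOn (f := Fin.val)
    (s := Finset.univ.filter fun l : Fin n => P l ∧ A ≤ (l : ℕ) ∧ (l : ℕ) < A + m)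
    (t := Finset.Ico A (A + m))
    (by intro a ha
        simp only [Finset.mem_coe, Finset.mem_filter] at ha
        simp only [Finset.mem_coe, Finset.mem_Ico]
        exact ⟨ha.2.2.1, ha.2.2.2⟩)
    (fun a _ b _ hab => Fin.ext hab)
  simpa using h

end aux


/-- Blocks of `[n]` (`n = n_1 + ⋯ + n_t`): block `s` consists of the
indices `l` with `S s ≤ l < S s + n_s`, where `S s = n_1 + ⋯ + n_{s-1}`. The
weak-order-poset weight `w` on `F_q^n` is characterized by `w 0 = 0` and, for
`x ≠ 0` with top nonzero block `s`, `w x = S s + (Hamming weight of x in block s)`.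
A linear automorphism `g` of `F_q^n` preserves `w` iff for each block `s` there is
a permutation `ρ_s` of block `s` (assembled below into a block-preserving
permutation `ρ` of all indices) such that for every `i` in block `s`,
`g(e_i) = a_i e_{ρ(i)} + Σ_{l < S s} b_{li} e_l` with `a_i ∈ F_qˣ`. -/
theorem stmt17 {F : Type*} [Field F] [Fintype F] [DecidableEq F]
    (t : ℕ) (ns : Fin t → ℕ) (hpos : ∀ s, 0 < ns s)
    (n : ℕ) (hn : n = ∑ s, ns s)
    (S : Fin t → ℕ)
    (hS : ∀ s, S s = ∑ i : Fin t, if i < s then ns i else 0)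
    (w : (Fin n → F) → ℕ)
    (hw0 : w 0 = 0)
    (hw : ∀ x : Fin n → F, x ≠ 0 → ∀ s : Fin t,
      (∀ l : Fin n, x l ≠ 0 → (l : ℕ) < S s + ns s) →
      (∃ l : Fin n, x l ≠ 0 ∧ S s ≤ (l : ℕ)) →
      w x = S s + (Finset.univ.filter fun l : Fin n =>
        x l ≠ 0 ∧ S s ≤ (l : ℕ) ∧ (l : ℕ) < S s + ns s).card)
    (g : (Fin n → F) ≃ₗ[F] (Fin n → F)) :
    (∀ u : Fin n → F, w (g u) = w u) ↔
      ∃ (ρ : Equiv.Perm (Fin n)) (a : Fin n → Fˣ),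
        (∀ (s : Fin t) (i : Fin n), S s ≤ (i : ℕ) → (i : ℕ) < S s + ns s →
          S s ≤ (ρ i : ℕ) ∧ (ρ i : ℕ) < S s + ns s) ∧
        (∀ i : Fin n, g (Pi.single i 1) (ρ i) = (a i : F)) ∧
        (∀ (s : Fin t) (i : Fin n), S s ≤ (i : ℕ) → (i : ℕ) < S s + ns s →
          ∀ l : Fin n, l ≠ ρ i → g (Pi.single i 1) l ≠ 0 → (l : ℕ) < S s) := by
    classical
  -- decomposition of g u coordinatewise
  have hdecomp : ∀ (u : Fin n → F) (l : Fin n),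
      g u l = ∑ i, u i * g (Pi.single i 1) l := by
    intro u l
    have hu : u = ∑ i, u i • (Pi.single i (1 : F) : Fin n → F) := by
      ext j
      rw [Finset.sum_apply]
      simp [Pi.single_apply]
    conv_lhs => rw [hu]
    rw [map_sum, Finset.sum_apply]
    apply Finset.sum_congr rfl
    intro i _
    rw [map_smul]
    simp
  -- top block existence
  have topblock : ∀ x : Fin n → F, x ≠ 0 →
      ∃ s : Fin t, (∀ l : Fin n, x l ≠ 0 → (l : ℕ) < S s + ns s) ∧
        ∃ l : Fin n, x l ≠ 0 ∧ S s ≤ (l : ℕ) := by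
    intro x hx
    have hne : (Finset.univ.filter fun l : Fin n => x l ≠ 0).Nonempty := by
      rcases Function.ne_iff.mp hx with ⟨l, hl⟩
      exact ⟨l, by simpa using hl⟩
    set l0 := (Finset.univ.filter fun l : Fin n => x l ≠ 0).max' hne with hl0def
    have hl0mem := (Finset.univ.filter fun l : Fin n => x l ≠ 0).max'_mem hne
    rw [← hl0def] at hl0mem
    simp only [Finset.mem_filter, Finset.mem_univ, true_and] at hl0mem
    obtain ⟨s, hs1, hs2⟩ := stmt17aux_exists hS hn l0
    refine ⟨s, ?_, l0, hl0mem, hs1⟩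
    intro l hl
    have hle : l ≤ l0 := Finset.le_max' _ l (by simpa using hl)
    exact lt_of_le_of_lt (Fin.le_def.mp hle) hs2
  -- weight of a standard basis vector
  have hWsingle : ∀ (s : Fin t) (i : Fin n), S s ≤ (i : ℕ) → (i : ℕ) < S s + ns s →
      w (Pi.single i 1) = S s + 1 := by
    intro s i h1 h2
    have hx : (Pi.single i 1 : Fin n → F) ≠ 0 := by
      intro h
      have := congrFun h i
      simp at this
    have hfil : (Finset.univ.filter fun l : Fin n =>
        (Pi.single i (1 : F) : Fin n → F) l ≠ 0 ∧ S s ≤ (l : ℕ) ∧ (l : ℕ) < S s + ns s) = {i} := by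
      ext l
      simp only [Finset.mem_filter, Finset.mem_univ, true_and, Finset.mem_singleton]
      constructor
      · rintro ⟨h0, -, -⟩
        by_contra hne
        exact h0 (Pi.single_eq_of_ne hne 1)
      · rintro rfl
        exact ⟨by simp, h1, h2⟩
    rw [hw _ hx s ?_ ⟨i, by simp, h1⟩]
    · rw [hfil, Finset.card_singleton]
    · intro l hl
      have hli : l = i := by
        by_contra hne
        exact hl (Pi.single_eq_of_ne hne 1)
      rw [hli]; exact h2
  constructor
  · -- forward direction
    intro hpres
    have hone : ∀ i : Fin n, ∃ li : Fin n,
        ∀ s : Fin t, S s ≤ (i : ℕ) → (i : ℕ) < S s + ns s →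
          g (Pi.single i 1) li ≠ 0 ∧ S s ≤ (li : ℕ) ∧ (li : ℕ) < S s + ns s ∧
          ∀ l : Fin n, l ≠ li → g (Pi.single i 1) l ≠ 0 → (l : ℕ) < S s := by
      intro i
      obtain ⟨s, hs1, hs2⟩ := stmt17aux_exists hS hn i
      set x := g (Pi.single i 1) with hxdef
      have hx0 : x ≠ 0 := by
        intro h
        have h2 : (Pi.single i (1 : F) : Fin n → F) = 0 := by
          apply g.injective
          rw [← hxdef, h, map_zero]
        have := congrFun h2 i
        simp at this
      obtain ⟨s'', hc1, l'', hl''ne, hl''ge⟩ := topblock x hx0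
      have hwx := hw x hx0 s'' hc1 ⟨l'', hl''ne, hl''ge⟩
      have hwx' : w x = S s + 1 := by
        rw [hxdef, hpres]
        exact hWsingle s i hs1 hs2
    -- w x = S s'' + card
      have hl''lt := hc1 l'' hl''ne
      have hcard_pos : 0 < (Finset.univ.filter fun l : Fin n =>
          x l ≠ 0 ∧ S s'' ≤ (l : ℕ) ∧ (l : ℕ) < S s'' + ns s'').card :=
        Finset.card_pos.mpr ⟨l'', by simp [hl''ne, hl''ge, hl''lt]⟩
      have hcard_le := stmt17aux_card (fun l : Fin n => x l ≠ 0) (S s'') (ns s'')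
      have hss : s'' = s := by
        rcases lt_trichotomy s'' s with h | h | h
        · have := stmt17aux_mono hS h; omega
        · exact h
        · have h1 := stmt17aux_mono hS h
          have := hpos s
          omega
      rw [hss] at hc1 hwx hcard_pos hcard_le
      have hcard1 : (Finset.univ.filter fun l : Fin n =>
          x l ≠ 0 ∧ S s ≤ (l : ℕ) ∧ (l : ℕ) < S s + ns s).card = 1 := by omega
      obtain ⟨li, hli⟩ := Finset.card_eq_one.mp hcard1
      have hlimem : li ∈ (Finset.univ.filter fun l : Fin n =>
          x l ≠ 0 ∧ S s ≤ (l : ℕ) ∧ (l : ℕ) < S s + ns s) := by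
        rw [hli]; exact Finset.mem_singleton_self li
      simp only [Finset.mem_filter, Finset.mem_univ, true_and] at hlimem
      refine ⟨li, ?_⟩
      intro s' h1' h2'
      have hseq : s' = s := stmt17aux_unique hS h1' h2' hs1 hs2
      rw [hseq]
      refine ⟨hlimem.1, hlimem.2.1, hlimem.2.2, ?_⟩
      intro l hlne hl0
      by_contra hge
      push_neg at hge
      have hmem : l ∈ (Finset.univ.filter fun l : Fin n =>
          x l ≠ 0 ∧ S s ≤ (l : ℕ) ∧ (l : ℕ) < S s + ns s) := by
        simp only [Finset.mem_filter, Finset.mem_univ, true_and]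
        exact ⟨hl0, hge, hc1 l hl0⟩
      rw [hli] at hmem
      simp only [Finset.mem_singleton] at hmem
      exact hlne hmem
    choose ρ0 hρ0 using hone
    have hinj : Function.Injective ρ0 := by
      intro i j hij
      by_contra hne
      obtain ⟨si, hi1, hi2⟩ := stmt17aux_exists hS hn i
      obtain ⟨sj, hj1, hj2⟩ := stmt17aux_exists hS hn j
      obtain ⟨hi0, hib1, hib2, hiz⟩ := hρ0 i si hi1 hi2
      obtain ⟨hj0, hjb1, hjb2, hjz⟩ := hρ0 j sj hj1 hj2
      have hsij : si = sj :=
        stmt17aux_unique hS hib1 hib2 (hij ▸ hjb1) (hij ▸ hjb2)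
      subst hsij
      have hc1 : g (Pi.single j 1) (ρ0 i) ≠ 0 := by
        rw [hij]; exact hj0
      have hc2 : g (Pi.single i 1) (ρ0 i) ≠ 0 := hi0
      set u : Fin n → F :=
        g (Pi.single j 1) (ρ0 i) • (Pi.single i 1 : Fin n → F)
          - g (Pi.single i 1) (ρ0 i) • (Pi.single j 1 : Fin n → F) with hudef
      have hui : u i = g (Pi.single j 1) (ρ0 i) := by
        rw [hudef]
        simp [Pi.single_apply, hne]
      have huj : u j = -(g (Pi.single i 1) (ρ0 i)) := by
        rw [hudef]
        simp [Pi.single_apply, Ne.symm hne]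
      have huz : ∀ m : Fin n, m ≠ i → m ≠ j → u m = 0 := by
        intro m hmi hmj
        rw [hudef]
        simp [Pi.single_apply, hmi, hmj]
      have hu0 : u ≠ 0 := by
        intro h
        apply hc1
        rw [← hui, h]
        simp
      have hfil2 : (Finset.univ.filter fun m : Fin n =>
          u m ≠ 0 ∧ S si ≤ (m : ℕ) ∧ (m : ℕ) < S si + ns si) = {i, j} := by
        ext m
        simp only [Finset.mem_filter, Finset.mem_univ, true_and, Finset.mem_insert,
          Finset.mem_singleton]
        constructor
        · rintro ⟨h0, -, -⟩
          by_contra hcon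
          push_neg at hcon
          exact h0 (huz m hcon.1 hcon.2)
        · rintro (rfl | rfl)
          · exact ⟨by rw [hui]; exact hc1, hi1, hi2⟩
          · exact ⟨by rw [huj]; simpa using hc2, hj1, hj2⟩
      have hwu : w u = S si + 2 := by
        rw [hw u hu0 si ?_ ⟨i, by rw [hui]; exact hc1, hi1⟩]
        · rw [hfil2, Finset.card_insert_of_notMem (by simpa using hne),
            Finset.card_singleton]
        · intro m hm
          by_cases hmi : m = i
          · rw [hmi]; exact hi2
          · by_cases hmj : m = j
            · rw [hmj]; exact hj2
            · exact absurd (huz m hmi hmj) hm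
      have hgz : ∀ m : Fin n, g u m ≠ 0 → (m : ℕ) < S si := by
        intro m hm
        by_contra hge
        push_neg at hge
        apply hm
        have hgu : g u = g (Pi.single j 1) (ρ0 i) • g (Pi.single i 1)
            - g (Pi.single i 1) (ρ0 i) • g (Pi.single j 1) := by
          rw [hudef, map_sub, map_smul, map_smul]
        rw [hgu]
        simp only [Pi.sub_apply, Pi.smul_apply, smul_eq_mul]
        by_cases hml : m = ρ0 i
        · rw [hml]; ring
        · have hz1 : g (Pi.single i 1) m = 0 := by
            by_contra h0
            exact absurd (hiz m hml h0) (not_lt.mpr hge)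
          have hz2 : g (Pi.single j 1) m = 0 := by
            by_contra h0
            have hmlj : m ≠ ρ0 j := by rw [← hij]; exact hml
            exact absurd (hjz m hmlj h0) (not_lt.mpr hge)
          rw [hz1, hz2]; ring
      have hgu0 : g u ≠ 0 := by
        intro h
        exact hu0 (g.injective (by rw [h, map_zero]))
      obtain ⟨s'', hcc1, l'', hl''1, hl''2⟩ := topblock (g u) hgu0
      have hwgu := hw (g u) hgu0 s'' hcc1 ⟨l'', hl''1, hl''2⟩
      have hslt : s'' < si := by
        have hlS : (l'' : ℕ) < S si := hgz l'' hl''1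
        by_contra hge
        push_neg at hge
        have := stmt17aux_mono' hS hge
        omega
      have hm1 := stmt17aux_mono hS hslt
      have hcle := stmt17aux_card (fun m : Fin n => g u m ≠ 0) (S s'') (ns s'')
      have hp := hpres u
      omega
    have hbij : Function.Bijective ρ0 := Finite.injective_iff_bijective.mp hinj
    have hane : ∀ i : Fin n, g (Pi.single i 1) (ρ0 i) ≠ 0 := by
      intro i
      obtain ⟨s, h1, h2⟩ := stmt17aux_exists hS hn i
      exact (hρ0 i s h1 h2).1
    refine ⟨Equiv.ofBijective ρ0 hbij, fun i => Units.mk0 _ (hane i), ?_, ?_, ?_⟩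
    · intro s i h1 h2
      have h := hρ0 i s h1 h2
      exact ⟨h.2.1, h.2.2.1⟩
    · intro i
      rfl
    · intro s i h1 h2 l hl hgl
      have h := hρ0 i s h1 h2
      exact h.2.2.2 l hl hgl
  · -- reverse direction
    rintro ⟨ρ, a, h1, h2, h3⟩ u
    by_cases hu : u = 0
    · rw [hu, map_zero]
    obtain ⟨s, hc1, l0, hl0, hl0'⟩ := topblock u hu
    have hsymm : ∀ (s' : Fin t) (l : Fin n), S s' ≤ (l : ℕ) → (l : ℕ) < S s' + ns s' →
        S s' ≤ ((ρ.symm l : Fin n) : ℕ) ∧ ((ρ.symm l : Fin n) : ℕ) < S s' + ns s' := by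
      intro s' l ha hb
      obtain ⟨s0, ha0, hb0⟩ := stmt17aux_exists hS hn (ρ.symm l)
      have hr := h1 s0 (ρ.symm l) ha0 hb0
      rw [ρ.apply_symm_apply] at hr
      have hs0 : s0 = s' := stmt17aux_unique hS hr.1 hr.2 ha hb
      rw [← hs0]
      exact ⟨ha0, hb0⟩
    have hco : ∀ l : Fin n, S s ≤ (l : ℕ) →
        g u l = u (ρ.symm l) * (a (ρ.symm l) : F) := by
      intro l hl
      have hh := h2 (ρ.symm l)
      rw [Equiv.apply_symm_apply] at hh
      have hzero : ∀ i ∈ Finset.univ, i ≠ ρ.symm l →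
          u i * g (Pi.single i 1) l = 0 := by
        intro i _ hne
        by_cases hui : u i = 0
        · rw [hui, zero_mul]
        · obtain ⟨si, ha0, hb0⟩ := stmt17aux_exists hS hn i
          have hile : (i : ℕ) < S s + ns s := hc1 i hui
          have hsile : S si ≤ S s := by
            rcases lt_trichotomy si s with h | h | h
            · have := stmt17aux_mono hS h; omega
            · rw [h]
            · exfalso
              have := stmt17aux_mono hS h
              omega
          have hlne : l ≠ ρ i := by
            intro hh2
            apply hne
            rw [hh2, Equiv.symm_apply_apply]
          have hgz : g (Pi.single i 1) l = 0 := by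
            by_contra h0
            have := h3 si i ha0 hb0 l hlne h0
            omega
          rw [hgz, mul_zero]
      rw [hdecomp, Finset.sum_eq_single_of_mem (ρ.symm l) (Finset.mem_univ _) hzero, hh]
    have hgu0 : g u ≠ 0 := by
      intro h
      exact hu (g.injective (by rw [h, map_zero]))
    have hcond1 : ∀ l : Fin n, g u l ≠ 0 → (l : ℕ) < S s + ns s := by
      intro l hl
      by_contra hge
      push_neg at hge
      have hge' : S s ≤ (l : ℕ) := le_trans (Nat.le_add_right _ _) hge
      have hco' := hco l hge'
      have hune : u (ρ.symm l) ≠ 0 := by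
        intro hh
        apply hl
        rw [hco', hh, zero_mul]
      have hlt := hc1 _ hune
      obtain ⟨sl, hsl1, hsl2⟩ := stmt17aux_exists hS hn l
      have hslt : s < sl := by
        rcases lt_trichotomy sl s with h | h | h
        · have := stmt17aux_mono hS h; omega
        · rw [h] at hsl2; omega
        · exact h
      have hsy := hsymm sl l hsl1 hsl2
      have := stmt17aux_mono hS hslt
      omega
    have hcond2 : ∃ l : Fin n, g u l ≠ 0 ∧ S s ≤ (l : ℕ) := by
      have hl0lt : (l0 : ℕ) < S s + ns s := hc1 l0 hl0
      have hb := h1 s l0 hl0' hl0lt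
      refine ⟨ρ l0, ?_, hb.1⟩
      rw [hco (ρ l0) hb.1, Equiv.symm_apply_apply]
      exact mul_ne_zero hl0 (Units.ne_zero _)
    rw [hw (g u) hgu0 s hcond1 hcond2, hw u hu s hc1 ⟨l0, hl0, hl0'⟩]
    congr 1
    apply Finset.card_bij' (fun l _ => ρ.symm l) (fun i _ => ρ i)
    · intro l hl
      simp only [Finset.mem_filter, Finset.mem_univ, true_and] at hl ⊢
      obtain ⟨hgl, ha, hb⟩ := hl
      have hs' := hsymm s l ha hb
      refine ⟨?_, hs'.1, hs'.2⟩
      intro hh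
      apply hgl
      rw [hco l ha, hh, zero_mul]
    · intro i hi
      simp only [Finset.mem_filter, Finset.mem_univ, true_and] at hi ⊢
      obtain ⟨hui, ha, hb⟩ := hi
      have hb' := h1 s i ha hb
      refine ⟨?_, hb'.1, hb'.2⟩
      rw [hco (ρ i) hb'.1, Equiv.symm_apply_apply]
      exact mul_ne_zero hui (Units.ne_zero _)
    · intro l hl
      exact ρ.apply_symm_apply l
    · intro i hi
      exact ρ.symm_apply_apply i
end

section
/- Let F_q be a finite field, n_1, …, n_t positive integers, and n = n_1 + ⋯ + n_t. Let w_{P₀} be the weak-order-poset weight on F_q^n associated to the block sizes (n_1, …, n_t), and let w_{P̌₀} be the weak-order-poset weight associated to the reversed block sizes (n_t, …, n_1) under the corresponding identification of F_q^n with F_q^{n_t} × ⋯ × F_q^{n_1}. If a linear automorphism g of F_q^n preserves w_{P₀}, then its transpose ᵗg (the adjoint with respect to the standard bilinear form x·y = Σ_{i=1}^n x_i y_i, characterized by gx·y = x·ᵗg y for all x, y) is a linear automorphism of F_q^n preserving w_{P̌₀}. -/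
/-- With blocks of `[n]` as in the weak order poset `P₀` given by
sizes `(n_1, …, n_t)` (block `s` is `[S s, S s + n_s)` with `S s = n_1 + ⋯ + n_{s-1}`),
`w` is the weak-order-poset weight of `P₀` (top nonzero block counts) and `wd` the
weight of the dual poset `P̌₀` with reversed block sizes: for `x ≠ 0` with bottom
nonzero block `s`, `wd x = (n_{s+1} + ⋯ + n_t) + (Hamming weight of x in block s)`.
If the linear automorphism `g` preserves `w`, then its transpose `ǧ` (characterized
by `g x · y = x · ǧ y` for the standard bilinear form) is a linear automorphism
preserving `wd`. -/
theorem stmt18 {F : Type*} [Field F] [Fintype F] [DecidableEq F]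
    (t : ℕ) (ns : Fin t → ℕ) (hpos : ∀ s, 0 < ns s)
    (n : ℕ) (hn : n = ∑ s, ns s)
    (S : Fin t → ℕ)
    (hS : ∀ s, S s = ∑ i : Fin t, if i < s then ns i else 0)
    (w : (Fin n → F) → ℕ)
    (hw0 : w 0 = 0)
    (hw : ∀ x : Fin n → F, x ≠ 0 → ∀ s : Fin t,
      (∀ l : Fin n, x l ≠ 0 → (l : ℕ) < S s + ns s) →
      (∃ l : Fin n, x l ≠ 0 ∧ S s ≤ (l : ℕ)) →
      w x = S s + (Finset.univ.filter fun l : Fin n =>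
        x l ≠ 0 ∧ S s ≤ (l : ℕ) ∧ (l : ℕ) < S s + ns s).card)
    (wd : (Fin n → F) → ℕ)
    (hwd0 : wd 0 = 0)
    (hwd : ∀ x : Fin n → F, x ≠ 0 → ∀ s : Fin t,
      (∀ l : Fin n, x l ≠ 0 → S s ≤ (l : ℕ)) →
      (∃ l : Fin n, x l ≠ 0 ∧ (l : ℕ) < S s + ns s) →
      wd x = (∑ j : Fin t, if s < j then ns j else 0) +
        (Finset.univ.filter fun l : Fin n =>
          x l ≠ 0 ∧ S s ≤ (l : ℕ) ∧ (l : ℕ) < S s + ns s).card)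
    (g : (Fin n → F) ≃ₗ[F] (Fin n → F))
    (hg : ∀ u : Fin n → F, w (g u) = w u)
    (gt : (Fin n → F) →ₗ[F] (Fin n → F))
    (hgt : ∀ x y : Fin n → F, ∑ i, g x i * y i = ∑ i, x i * gt y i) :
    Function.Bijective gt ∧ ∀ u : Fin n → F, wd (gt u) = wd u := by
  classical
  -- basic facts about the block boundaries
  have hSS : ∀ s : Fin t, S s + ns s = ∑ i : Fin t, if i ≤ s then ns i else 0 := by
    intro s
    have h1 : ∀ i : Fin t, (if i ≤ s then ns i else 0)
        = (if i < s then ns i else 0) + (if i = s then ns i else 0) := by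
      intro i
      rcases lt_trichotomy i s with h | h | h
      · simp [h.le, h, h.ne]
      · subst h; simp
      · simp [h.ne', not_le.2 h, not_lt.2 h.le]
    rw [Finset.sum_congr rfl fun i _ => h1 i, Finset.sum_add_distrib, ← hS]
    simp
  have hmon : ∀ s s' : Fin t, s ≤ s' → S s ≤ S s' := by
    intro s s' h
    rw [hS, hS]
    apply Finset.sum_le_sum
    intro i _
    by_cases hi : i < s
    · simp [hi, lt_of_lt_of_le hi h]
    · simp [hi]
  have hcmp : ∀ s s' : Fin t, s < s' → S s + ns s ≤ S s' := by
    intro s s' h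
    rw [hSS, hS s']
    apply Finset.sum_le_sum
    intro i _
    by_cases hi : i ≤ s
    · simp [hi, lt_of_le_of_lt hi h]
    · simp [hi]
  have hblk : ∀ l : Fin n, ∃ s : Fin t, S s ≤ (l : ℕ) ∧ (l : ℕ) < S s + ns s := by
    intro l
    have hln := l.isLt
    have ht : 0 < t := by
      rcases Nat.eq_zero_or_pos t with h | h
      · subst h; simp at hn; omega
      · exact h
    have hS0 : S ⟨0, ht⟩ = 0 := by
      rw [hS]
      apply Finset.sum_eq_zero
      intro i _
      have : ¬ i < (⟨0, ht⟩ : Fin t) := by simp [Fin.lt_def]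
      simp [this]
    set Fs := Finset.univ.filter (fun s : Fin t => S s ≤ (l : ℕ)) with hFs
    have hne : Fs.Nonempty := ⟨⟨0, ht⟩, by simp [hFs, hS0]⟩
    set s := Fs.max' hne with hsdef
    have hs1 : S s ≤ (l : ℕ) :=
      (Finset.mem_filter.1 (Fs.max'_mem hne)).2
    refine ⟨s, hs1, ?_⟩
    by_contra h
    push_neg at h
    by_cases h2 : s.val + 1 < t
    · have heq : S ⟨s.val + 1, h2⟩ = S s + ns s := by
        rw [hSS, hS]
        apply Finset.sum_congr rfl
        intro i _
        have hiff : (i < (⟨s.val + 1, h2⟩ : Fin t)) ↔ i ≤ s := by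
          rw [Fin.lt_def, Fin.le_def]
          exact Nat.lt_succ_iff
        simp [hiff]
      have hmem : (⟨s.val + 1, h2⟩ : Fin t) ∈ Fs := by
        simp only [hFs, Finset.mem_filter, Finset.mem_univ, true_and]
        omega
      have := Fs.le_max' _ hmem
      rw [← hsdef] at this
      have : s.val + 1 ≤ s.val := this
      omega
    · have hall : ∀ i : Fin t, i ≤ s := by
        intro i
        have := i.isLt
        exact Fin.le_def.2 (by omega)
      have : S s + ns s = n := by
        rw [hSS, hn]
        apply Finset.sum_congr rfl
        intro i _
        simp [hall i]
      omega
  -- Hamming weight in a block is at most the block size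
  have hcard_le : ∀ (s : Fin t) (x : Fin n → F),
      (Finset.univ.filter fun l : Fin n =>
        x l ≠ 0 ∧ S s ≤ (l : ℕ) ∧ (l : ℕ) < S s + ns s).card ≤ ns s := by
    intro s x
    calc (Finset.univ.filter fun l : Fin n =>
          x l ≠ 0 ∧ S s ≤ (l : ℕ) ∧ (l : ℕ) < S s + ns s).card
        ≤ (Finset.range (ns s)).card := by
          apply Finset.card_le_card_of_injOn (fun l : Fin n => (l : ℕ) - S s)
          · intro l hl
            simp only [Finset.mem_coe, Finset.mem_filter] at hl
            simp only [Finset.mem_coe, Finset.mem_range]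
            omega
          · intro a ha b hb hab
            simp only [Finset.mem_coe, Finset.mem_filter] at ha hb
            have hab' : (a : ℕ) - S s = (b : ℕ) - S s := hab
            have h1 := ha.2.2.1
            have h2 := hb.2.2.1
            exact Fin.ext (by omega)
      _ = ns s := Finset.card_range _
  -- top block decomposition of the weight
  have htop : ∀ x : Fin n → F, x ≠ 0 → ∃ s₀ : Fin t,
      (∀ l : Fin n, x l ≠ 0 → (l : ℕ) < S s₀ + ns s₀) ∧
      (∃ l : Fin n, x l ≠ 0 ∧ S s₀ ≤ (l : ℕ)) ∧
      S s₀ < w x ∧ w x ≤ S s₀ + ns s₀ := by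
    intro x hx
    have hne : (Finset.univ.filter fun l : Fin n => x l ≠ 0).Nonempty := by
      rcases Function.ne_iff.1 hx with ⟨l, hl⟩
      exact ⟨l, by simpa using hl⟩
    set l₀ := (Finset.univ.filter fun l : Fin n => x l ≠ 0).max' hne with hl₀def
    have hl₀x : x l₀ ≠ 0 := by
      have := (Finset.univ.filter fun l : Fin n => x l ≠ 0).max'_mem hne
      simpa using this
    obtain ⟨s₀, h1, h2⟩ := hblk l₀
    have hsupp : ∀ l : Fin n, x l ≠ 0 → (l : ℕ) < S s₀ + ns s₀ := by
      intro l hl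
      have hle : l ≤ l₀ := Finset.le_max' _ _ (by simpa using hl)
      have : (l : ℕ) ≤ (l₀ : ℕ) := hle
      omega
    have hwit : ∃ l : Fin n, x l ≠ 0 ∧ S s₀ ≤ (l : ℕ) := ⟨l₀, hl₀x, h1⟩
    have hwx := hw x hx s₀ hsupp hwit
    have hpos' : 0 < (Finset.univ.filter fun l : Fin n =>
        x l ≠ 0 ∧ S s₀ ≤ (l : ℕ) ∧ (l : ℕ) < S s₀ + ns s₀).card := by
      apply Finset.card_pos.2
      exact ⟨l₀, by simp [hl₀x, h1, h2]⟩
    have hle := hcard_le s₀ x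
    exact ⟨s₀, hsupp, hwit, by omega, by omega⟩
  -- upper and lower bounds for the weight by support constraints
  have hupper : ∀ (x : Fin n → F), x ≠ 0 → ∀ s : Fin t,
      (∀ l : Fin n, x l ≠ 0 → (l : ℕ) < S s + ns s) → w x ≤ S s + ns s := by
    intro x hx s hs
    obtain ⟨s₀, h1, ⟨l, hl, hl2⟩, h3, h4⟩ := htop x hx
    have hss : s₀ ≤ s := by
      by_contra h
      push_neg at h
      have := hcmp s s₀ h
      have := hs l hl
      omega
    rcases eq_or_lt_of_le hss with h | h
    · rw [← h]; exact h4
    · have h5 := hcmp s₀ s h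
      omega
  have hlower : ∀ (x : Fin n → F), x ≠ 0 → ∀ s : Fin t,
      (∃ l : Fin n, x l ≠ 0 ∧ S s ≤ (l : ℕ)) → S s < w x := by
    rintro x hx s ⟨l, hl, hls⟩
    obtain ⟨s₀, h1, _, h3, _⟩ := htop x hx
    have hss : s ≤ s₀ := by
      by_contra h
      push_neg at h
      have := hcmp s₀ s h
      have := h1 l hl
      omega
    have := hmon s s₀ hss
    omega
  -- g preserves the filtration by blocks
  have hgV : ∀ (s : Fin t) (x : Fin n → F),
      (∀ l : Fin n, x l ≠ 0 → (l : ℕ) < S s + ns s) →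
      (∀ l : Fin n, g x l ≠ 0 → (l : ℕ) < S s + ns s) := by
    intro s x hx l hl
    by_contra h
    push_neg at h
    have hx0 : x ≠ 0 := by
      intro h0
      rw [h0, map_zero] at hl
      exact hl rfl
    have hgx0 : g x ≠ 0 := fun h0 => hl (by rw [h0]; rfl)
    obtain ⟨s₁, hb1, hb2⟩ := hblk l
    have hs1 : s < s₁ := by
      by_contra hc
      push_neg at hc
      rcases eq_or_lt_of_le hc with hc | hc
      · rw [hc] at hb2; omega
      · have := hcmp s₁ s hc; omega
    have h5 := hlower (g x) hgx0 s₁ ⟨l, hl, hb1⟩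
    have h6 : w x ≤ S s + ns s := hupper x hx0 s hx
    have h7 := hcmp s s₁ hs1
    rw [hg x] at h5
    omega
  -- evaluation of the bilinear form against basis vectors
  set e : Fin n → Fin n → F := fun j i => if i = j then 1 else 0 with hedef
  have esum : ∀ (j : Fin n) (z : Fin n → F), ∑ i, e j i * z i = z j := by
    intro j z
    rw [Finset.sum_eq_single j]
    · simp [hedef]
    · intro b _ hb
      simp [hedef, hb]
    · intro h
      exact absurd (Finset.mem_univ _) h
  have hgtapp : ∀ (y : Fin n → F) (j : Fin n),
      gt y j = ∑ i, g (e j) i * y i := by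
    intro y j
    have h := hgt (e j) y
    rw [esum j (fun i => gt y i)] at h
    exact h.symm
  -- gt is injective, hence bijective
  have hgtinj : Function.Injective gt := by
    have key : ∀ z : Fin n → F, gt z = 0 → z = 0 := by
      intro z hz
      funext j
      obtain ⟨x, hx⟩ := g.surjective (e j)
      have h2 := hgt x z
      rw [hx, esum j z, hz] at h2
      simpa using h2
    intro y y' h
    have h1 : gt (y - y') = 0 := by rw [map_sub, h, sub_self]
    have := key _ h1
    exact sub_eq_zero.1 this
  have hgtbij : Function.Bijective gt := Finite.injective_iff_bijective.1 hgtinj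
  -- gt preserves the dual filtration
  have hgtB : ∀ (s : Fin t) (y : Fin n → F),
      (∀ l : Fin n, y l ≠ 0 → S s + ns s ≤ (l : ℕ)) →
      (∀ l : Fin n, gt y l ≠ 0 → S s + ns s ≤ (l : ℕ)) := by
    intro s y hy l hl
    by_contra h
    push_neg at h
    apply hl
    rw [hgtapp]
    apply Finset.sum_eq_zero
    intro i _
    have hsupp : ∀ m : Fin n, e l m ≠ 0 → (m : ℕ) < S s + ns s := by
      intro m hm
      have hml : m = l := by
        by_contra hml
        exact hm (by simp [hedef, hml])
      rw [hml]
      omega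
    rcases lt_or_ge (i : ℕ) (S s + ns s) with hi | hi
    · have : y i = 0 := by
        by_contra hyi
        exact absurd (hy i hyi) (by omega)
      rw [this, mul_zero]
    · have : g (e l) i = 0 := by
        by_contra hgi
        exact absurd (hgV s (e l) hsupp i hgi) (by omega)
      rw [this, zero_mul]
  -- ... and is bijective on each piece of the dual filtration
  have hgtBrev : ∀ (s : Fin t) (y : Fin n → F),
      (∀ l : Fin n, gt y l ≠ 0 → S s + ns s ≤ (l : ℕ)) →
      (∀ l : Fin n, y l ≠ 0 → S s + ns s ≤ (l : ℕ)) := by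
    intro s y hy
    set Bf : Finset (Fin n → F) := Finset.univ.filter
      (fun z => ∀ l : Fin n, z l ≠ 0 → S s + ns s ≤ (l : ℕ)) with hBf
    have hsurj := Finset.surj_on_of_inj_on_of_card_le (s := Bf) (t := Bf)
      (fun z _ => gt z)
      (fun z hz => by
        simp only [hBf, Finset.mem_filter, Finset.mem_univ, true_and] at hz ⊢
        exact hgtB s z hz)
      (fun a₁ a₂ _ _ hab => hgtinj hab) le_rfl
    have hyB : gt y ∈ Bf := Finset.mem_filter.2 ⟨Finset.mem_univ _, hy⟩
    obtain ⟨z, hzB, hzy⟩ := hsurj (gt y) hyB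
    have hyz : y = z := hgtinj hzy
    rw [hyz]
    exact (Finset.mem_filter.1 hzB).2
  -- monomial structure of g on each block
  have hmono : ∀ (s : Fin t) (k : Fin n), ∃ p : Fin n,
      S s ≤ (k : ℕ) → (k : ℕ) < S s + ns s →
      S s ≤ (p : ℕ) ∧ (p : ℕ) < S s + ns s ∧ g (e k) p ≠ 0 ∧
      (∀ i : Fin n, i ≠ p → S s ≤ (i : ℕ) → (i : ℕ) < S s + ns s →
        g (e k) i = 0) ∧
      (∀ i : Fin n, g (e k) i ≠ 0 → (i : ℕ) < S s + ns s) := by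
    intro s k
    by_cases hk1 : S s ≤ (k : ℕ)
    swap
    · exact ⟨k, fun h _ => absurd h hk1⟩
    by_cases hk2 : (k : ℕ) < S s + ns s
    swap
    · exact ⟨k, fun _ h => absurd h hk2⟩
    set x : Fin n → F := e k with hxdef
    have hx0 : x ≠ 0 := by
      intro h
      have := congrFun h k
      simp [hxdef, hedef] at this
    have hxsupp : ∀ l : Fin n, x l ≠ 0 → (l : ℕ) < S s + ns s := by
      intro l hl
      have hlk : l = k := by
        by_contra h
        exact hl (by simp [hxdef, hedef, h])
      rw [hlk]
      exact hk2
    have hgsupp : ∀ l, g x l ≠ 0 → (l : ℕ) < S s + ns s := hgV s x hxsupp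
    have hwx : w x = S s + 1 := by
      rw [hw x hx0 s hxsupp ⟨k, by simp [hxdef, hedef], hk1⟩]
      congr 1
      rw [Finset.card_eq_one]
      refine ⟨k, ?_⟩
      ext l
      simp only [Finset.mem_filter, Finset.mem_univ, true_and, Finset.mem_singleton]
      constructor
      · rintro ⟨h1, -, -⟩
        by_contra h
        exact h1 (by simp [hxdef, hedef, h])
      · rintro rfl
        exact ⟨by simp [hxdef, hedef], hk1, hk2⟩
    have hgx0 : g x ≠ 0 := fun h => hx0 (g.injective (by rw [h, map_zero]))
    have hwgx : w (g x) = S s + 1 := by rw [hg, hwx]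
    obtain ⟨s₀, hb1, hb2, hb3, hb4⟩ := htop (g x) hgx0
    have hs0 : s₀ = s := by
      rcases lt_trichotomy s₀ s with h | h | h
      · have := hcmp s₀ s h; omega
      · exact h
      · have := hcmp s s₀ h; have := hpos s; omega
    rw [hs0] at hb1 hb2
    have hcard1 : (Finset.univ.filter fun l : Fin n =>
        g x l ≠ 0 ∧ S s ≤ (l : ℕ) ∧ (l : ℕ) < S s + ns s).card = 1 := by
      have := hw (g x) hgx0 s hb1 hb2
      omega
    obtain ⟨p, hp⟩ := Finset.card_eq_one.1 hcard1
    have hpmem : p ∈ Finset.univ.filter fun l : Fin n =>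
        g x l ≠ 0 ∧ S s ≤ (l : ℕ) ∧ (l : ℕ) < S s + ns s := by
      rw [hp]; exact Finset.mem_singleton_self p
    simp only [Finset.mem_filter, Finset.mem_univ, true_and] at hpmem
    refine ⟨p, fun _ _ => ⟨hpmem.2.1, hpmem.2.2, hpmem.1, ?_, hgsupp⟩⟩
    intro i hip hi1 hi2
    by_contra hgi
    have : i ∈ Finset.univ.filter fun l : Fin n =>
        g x l ≠ 0 ∧ S s ≤ (l : ℕ) ∧ (l : ℕ) < S s + ns s := by
      simp only [Finset.mem_filter, Finset.mem_univ, true_and]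
      exact ⟨hgi, hi1, hi2⟩
    rw [hp, Finset.mem_singleton] at this
    exact hip this
  choose π hπ using hmono
  -- π s is injective on block s
  have hπinj : ∀ (s : Fin t) (k k' : Fin n),
      S s ≤ (k : ℕ) → (k : ℕ) < S s + ns s → S s ≤ (k' : ℕ) → (k' : ℕ) < S s + ns s →
      π s k = π s k' → k = k' := by
    intro s k k' hk1 hk2 hk1' hk2' hpp
    by_contra hkk
    obtain ⟨hp1, hp2, hp3, hp4, hp5⟩ := hπ s k hk1 hk2
    obtain ⟨hq1, hq2, hq3, hq4, hq5⟩ := hπ s k' hk1' hk2'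
    set c : F := g (e k) (π s k) with hcdef
    set c' : F := g (e k') (π s k') with hcdef'
    set x : Fin n → F := c' • e k - c • e k' with hxdef
    have hxk : x k = c' := by
      simp [hxdef, hedef, hkk, Ne.symm hkk]
    have hx0 : x ≠ 0 := by
      intro h
      have := congrFun h k
      rw [hxk] at this
      exact hq3 this
    have hxsupp : ∀ l : Fin n, x l ≠ 0 → (l : ℕ) < S s + ns s := by
      intro l hl
      by_cases hlk : l = k
      · rw [hlk]; exact hk2
      by_cases hlk' : l = k'
      · rw [hlk']; exact hk2'
      exfalso
      exact hl (by simp [hxdef, hedef, hlk, hlk'])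
    have hgx : g x = c' • g (e k) - c • g (e k') := by
      rw [hxdef, map_sub, map_smul, map_smul]
    have hgxblk : ∀ l : Fin n, S s ≤ (l : ℕ) → (l : ℕ) < S s + ns s → g x l = 0 := by
      intro l hl1 hl2
      rw [hgx]
      simp only [Pi.sub_apply, Pi.smul_apply, smul_eq_mul]
      by_cases hlp : l = π s k
      · rw [hlp, ← hcdef, hpp, ← hcdef']
        ring
      · rw [hp4 l hlp hl1 hl2, hq4 l (by rw [← hpp]; exact hlp) hl1 hl2]
        ring
    have hgxsupp : ∀ l : Fin n, g x l ≠ 0 → (l : ℕ) < S s := by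
      intro l hl
      have hlt : (l : ℕ) < S s + ns s := by
        rw [hgx] at hl
        simp only [Pi.sub_apply, Pi.smul_apply, smul_eq_mul] at hl
        by_contra hc
        push_neg at hc
        have e1 : g (e k) l = 0 := by
          by_contra h'; exact absurd (hp5 l h') (by omega)
        have e2 : g (e k') l = 0 := by
          by_contra h'; exact absurd (hq5 l h') (by omega)
        rw [e1, e2] at hl
        simp at hl
      by_contra hc
      push_neg at hc
      exact hl (hgxblk l hc hlt)
    have hgx0 : g x ≠ 0 := fun h => hx0 (g.injective (by rw [h, map_zero]))
    -- w (g x) ≤ S s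
    obtain ⟨s₀, hb1, ⟨l, hl, hls⟩, hb3, hb4⟩ := htop (g x) hgx0
    have hls2 : (l : ℕ) < S s := hgxsupp l hl
    have hs0 : s₀ < s := by
      by_contra hc
      push_neg at hc
      have := hmon s s₀ hc
      omega
    have h8 := hcmp s₀ s hs0
    -- w x ≥ S s + 1
    have hwx : S s < w x := hlower x hx0 s ⟨k, by rw [hxk]; exact hq3, hk1⟩
    rw [← hg x] at hwx
    omega
  -- π s is surjective on block s
  have hπsurj : ∀ (s : Fin t) (p : Fin n), S s ≤ (p : ℕ) → (p : ℕ) < S s + ns s →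
      ∃ k : Fin n, S s ≤ (k : ℕ) ∧ (k : ℕ) < S s + ns s ∧ π s k = p := by
    intro s p hp1 hp2
    set blkF : Finset (Fin n) := Finset.univ.filter
      (fun l : Fin n => S s ≤ (l : ℕ) ∧ (l : ℕ) < S s + ns s) with hblkF
    have hsurj := Finset.surj_on_of_inj_on_of_card_le (s := blkF) (t := blkF)
      (fun k _ => π s k)
      (fun k hk => by
        simp only [hblkF, Finset.mem_filter, Finset.mem_univ, true_and] at hk ⊢
        obtain ⟨hp1', hp2', _, _, _⟩ := hπ s k hk.1 hk.2
        exact ⟨hp1', hp2'⟩)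
      (fun a₁ a₂ ha₁ ha₂ hab => by
        simp only [hblkF, Finset.mem_filter, Finset.mem_univ, true_and] at ha₁ ha₂
        exact hπinj s a₁ a₂ ha₁.1 ha₁.2 ha₂.1 ha₂.2 hab)
      le_rfl
    obtain ⟨k, hk, hkp⟩ := hsurj p
      (Finset.mem_filter.2 ⟨Finset.mem_univ _, hp1, hp2⟩)
    have hk' := Finset.mem_filter.1 hk
    exact ⟨k, hk'.2.1, hk'.2.2, hkp.symm⟩
  -- the main statement
  refine ⟨hgtbij, ?_⟩
  intro y
  by_cases hy0 : y = 0
  · rw [hy0, map_zero]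
  have hgty0 : gt y ≠ 0 := by
    intro h
    exact hy0 (hgtinj (h.trans (map_zero gt).symm))
  -- bottom block of y
  have hne : (Finset.univ.filter fun l : Fin n => y l ≠ 0).Nonempty := by
    rcases Function.ne_iff.1 hy0 with ⟨l, hl⟩
    exact ⟨l, by simpa using hl⟩
  set l₁ := (Finset.univ.filter fun l : Fin n => y l ≠ 0).min' hne with hl₁def
  have hl₁y : y l₁ ≠ 0 := by
    have := (Finset.univ.filter fun l : Fin n => y l ≠ 0).min'_mem hne
    simpa using this
  obtain ⟨s, hs1, hs2⟩ := hblk l₁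
  have hylow : ∀ l : Fin n, y l ≠ 0 → S s ≤ (l : ℕ) := by
    intro l hl
    have hle : l₁ ≤ l := Finset.min'_le _ _ (by simpa using hl)
    have : (l₁ : ℕ) ≤ (l : ℕ) := hle
    omega
  have hywit : ∃ l : Fin n, y l ≠ 0 ∧ (l : ℕ) < S s + ns s := ⟨l₁, hl₁y, hs2⟩
  -- gt y has support ≥ S s
  have hgtylow : ∀ l : Fin n, gt y l ≠ 0 → S s ≤ (l : ℕ) := by
    by_cases hsv : s.val = 0
    · intro l _
      have hS0 : S s = 0 := by
        rw [hS]
        apply Finset.sum_eq_zero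
        intro i _
        have hns : ¬ i < s := by
          rw [Fin.lt_def]
          omega
        simp [hns]
      omega
    · have hs't : s.val - 1 < t := by have := s.isLt; omega
      set s' : Fin t := ⟨s.val - 1, hs't⟩ with hs'def
      have hSs : S s = S s' + ns s' := by
        rw [hS, hSS]
        apply Finset.sum_congr rfl
        intro i _
        have hiff : (i < s) ↔ (i ≤ s') := by
          simp only [Fin.lt_def, Fin.le_def, hs'def]
          omega
        simp [hiff]
      intro l hl
      have h1 : ∀ m : Fin n, y m ≠ 0 → S s' + ns s' ≤ (m : ℕ) := by
        intro m hm
        rw [← hSs]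
        exact hylow m hm
      have := hgtB s' y h1 l hl
      omega
  -- gt y has a support element in block s
  have hgtywit : ∃ l : Fin n, gt y l ≠ 0 ∧ (l : ℕ) < S s + ns s := by
    by_contra h
    push_neg at h
    have h2 := hgtBrev s y h
    obtain ⟨l, hl, hl2⟩ := hywit
    have := h2 l hl
    omega
  -- key formula: gt y on block s is monomial
  have hkey : ∀ k : Fin n, S s ≤ (k : ℕ) → (k : ℕ) < S s + ns s →
      gt y k = g (e k) (π s k) * y (π s k) := by
    intro k hk1 hk2
    obtain ⟨hp1, hp2, hp3, hp4, hp5⟩ := hπ s k hk1 hk2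
    rw [hgtapp]
    apply Finset.sum_eq_single (π s k)
    · intro i _ hi
      rcases lt_or_ge (i : ℕ) (S s) with h | h
      · rcases eq_or_ne (y i) 0 with h' | h'
        · rw [h', mul_zero]
        · exact absurd (hylow i h') (by omega)
      rcases lt_or_ge (i : ℕ) (S s + ns s) with h2 | h2
      · rw [hp4 i hi h h2, zero_mul]
      · rcases eq_or_ne (g (e k) i) 0 with h' | h'
        · rw [h', zero_mul]
        · exact absurd (hp5 i h') (by omega)
    · intro h
      exact absurd (Finset.mem_univ _) h
  rw [hwd y hy0 s hylow hywit, hwd (gt y) hgty0 s hgtylow hgtywit]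
  congr 1
  apply Finset.card_bij (fun (k : Fin n) _ => π s k)
  · intro k hk
    simp only [Finset.mem_filter, Finset.mem_univ, true_and] at hk ⊢
    obtain ⟨hk0, hk1, hk2⟩ := hk
    obtain ⟨hp1, hp2, hp3, _, _⟩ := hπ s k hk1 hk2
    refine ⟨?_, hp1, hp2⟩
    have hkf := hkey k hk1 hk2
    intro h
    rw [h, mul_zero] at hkf
    exact hk0 hkf
  · intro a ha₁ b hb₁ hab
    simp only [Finset.mem_filter, Finset.mem_univ, true_and] at ha₁ hb₁
    exact hπinj s a b ha₁.2.1 ha₁.2.2 hb₁.2.1 hb₁.2.2 hab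
  · intro p hp
    simp only [Finset.mem_filter, Finset.mem_univ, true_and] at hp
    obtain ⟨hp0, hp1, hp2⟩ := hp
    obtain ⟨k, hk1, hk2, hkp⟩ := hπsurj s p hp1 hp2
    refine ⟨k, ?_, hkp⟩
    simp only [Finset.mem_filter, Finset.mem_univ, true_and]
    refine ⟨?_, hk1, hk2⟩
    obtain ⟨_, _, hp3, _, _⟩ := hπ s k hk1 hk2
    rw [hkey k hk1 hk2, hkp]
    exact mul_ne_zero (hkp ▸ hp3) hp0
end

section
/- Let F_q be a finite field, n_1, …, n_t positive integers, n = n_1 + ⋯ + n_t, and let w_{P₀} be the weak-order-poset weight on F_q^n associated to the block sizes (n_1, …, n_t). Then the group G = Aut(F_q^n, w_{P₀}) of linear automorphisms of F_q^n preserving w_{P₀} acts transitively on each sphere: for all x, y ∈ F_q^n, w_{P₀}(x) = w_{P₀}(y) if and only if there exists g ∈ G with g(x) = y. Hence the G-orbits on F_q^n are exactly the sets O_i = {x ∈ F_q^n : w_{P₀}(x) = i}, i = 0, 1, …, n. -/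
/-- Shear linear equivalence: add to each coordinate a multiple of coordinate `k`,
with zero coefficient at `k` itself. -/
def stmt19shear (F : Type*) [Field F] {n : ℕ} (k : Fin n) (c : Fin n → F) (hck : c k = 0) :
    (Fin n → F) ≃ₗ[F] (Fin n → F) where
  toFun u := u + fun l => c l * u k
  invFun u := u - fun l => c l * u k
  map_add' u v := by funext l; simp only [Pi.add_apply]; ring
  map_smul' a u := by funext l; simp only [Pi.add_apply, Pi.smul_apply, smul_eq_mul,
    RingHom.id_apply]; ring
  left_inv u := by funext l; simp only [Pi.sub_apply, Pi.add_apply, hck]; ring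
  right_inv u := by funext l; simp only [Pi.sub_apply, Pi.add_apply, hck]; ring

theorem stmt19shear_apply {F : Type*} [Field F] {n : ℕ} (k : Fin n) (c : Fin n → F)
    (hck : c k = 0) (u : Fin n → F) (l : Fin n) :
    stmt19shear F k c hck u l = u l + c l * u k := rfl

/-- Diagonal linear equivalence. -/
def stmt19diag (F : Type*) [Field F] {n : ℕ} (d : Fin n → F) (hd : ∀ l, d l ≠ 0) :
    (Fin n → F) ≃ₗ[F] (Fin n → F) where
  toFun u := fun l => d l * u l
  invFun u := fun l => (d l)⁻¹ * u l
  map_add' u v := by funext l; simp only [Pi.add_apply]; ring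
  map_smul' a u := by funext l; simp only [Pi.smul_apply, smul_eq_mul, RingHom.id_apply]; ring
  left_inv u := by funext l; simp only []; rw [← mul_assoc, inv_mul_cancel₀ (hd l), one_mul]
  right_inv u := by funext l; simp only []; rw [← mul_assoc, mul_inv_cancel₀ (hd l), one_mul]

theorem stmt19diag_apply {F : Type*} [Field F] {n : ℕ} (d : Fin n → F) (hd : ∀ l, d l ≠ 0)
    (u : Fin n → F) (l : Fin n) : stmt19diag F d hd u l = d l * u l := rfl

/-- With the weak-order-poset weight `w` on `F_q^n` given by block
sizes `(n_1, …, n_t)` (characterized via `S s = n_1 + ⋯ + n_{s-1}` and the top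
nonzero block, as in Statement 17), the group of `w`-preserving linear
automorphisms acts transitively on each sphere: `w x = w y` iff some
`w`-preserving linear automorphism `g` has `g x = y`. Hence the orbits are
exactly the spheres `O_i = {x : w x = i}`. -/
theorem stmt19 {F : Type*} [Field F] [Fintype F] [DecidableEq F]
    (t : ℕ) (ns : Fin t → ℕ) (hpos : ∀ s, 0 < ns s)
    (n : ℕ) (hn : n = ∑ s, ns s)
    (S : Fin t → ℕ)
    (hS : ∀ s, S s = ∑ i : Fin t, if i < s then ns i else 0)
    (w : (Fin n → F) → ℕ)
    (hw0 : w 0 = 0)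
    (hw : ∀ x : Fin n → F, x ≠ 0 → ∀ s : Fin t,
      (∀ l : Fin n, x l ≠ 0 → (l : ℕ) < S s + ns s) →
      (∃ l : Fin n, x l ≠ 0 ∧ S s ≤ (l : ℕ)) →
      w x = S s + (Finset.univ.filter fun l : Fin n =>
        x l ≠ 0 ∧ S s ≤ (l : ℕ) ∧ (l : ℕ) < S s + ns s).card) :
    ∀ x y : Fin n → F, w x = w y ↔
      ∃ g : (Fin n → F) ≃ₗ[F] (Fin n → F),
        (∀ u : Fin n → F, w (g u) = w u) ∧ g x = y := by
  classical
  -- ## Step 1 : arithmetic facts about the partial sums `S`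
  have hSf : ∀ s, S s = ∑ i ∈ Finset.univ.filter (· < s), ns i := by
    intro s; rw [hS]; exact (Finset.sum_filter _ _).symm
  have hSstep : ∀ s1 s2 : Fin t, s1 < s2 → S s1 + ns s1 ≤ S s2 := by
    intro s1 s2 h
    have h1 : S s1 + ns s1 = ∑ i ∈ insert s1 (Finset.univ.filter (· < s1)), ns i := by
      rw [Finset.sum_insert (by simp), hSf]; ring
    rw [h1, hSf]
    apply Finset.sum_le_sum_of_subset
    intro i hi
    simp only [Finset.mem_insert, Finset.mem_filter, Finset.mem_univ, true_and] at hi ⊢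
    rcases hi with rfl | hi
    · exact h
    · exact lt_trans hi h
  have hSmono : ∀ s1 s2 : Fin t, s1 ≤ s2 → S s1 ≤ S s2 := by
    intro s1 s2 h
    rw [hSf, hSf]
    apply Finset.sum_le_sum_of_subset
    intro i hi
    simp only [Finset.mem_filter, Finset.mem_univ, true_and] at hi ⊢
    exact lt_of_lt_of_le hi h
  have hblock : ∀ l : Fin n, ∃ s : Fin t, S s ≤ (l : ℕ) ∧ (l : ℕ) < S s + ns s := by
    intro l
    have ht : 0 < t := by
      rcases Nat.eq_zero_or_pos t with rfl | h
      · exfalso; rw [hn] at l; simpa using l.isLt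
      · exact h
    have hl : (l : ℕ) < n := l.isLt
    set T := Finset.univ.filter (fun s : Fin t => (l : ℕ) < S s + ns s) with hT
    have hTne : T.Nonempty := by
      refine ⟨⟨t - 1, by omega⟩, ?_⟩
      simp only [hT, Finset.mem_filter, Finset.mem_univ, true_and]
      have : S ⟨t - 1, by omega⟩ + ns ⟨t - 1, by omega⟩ = n := by
        have h1 : S ⟨t - 1, by omega⟩ + ns ⟨t - 1, by omega⟩
            = ∑ i ∈ insert (⟨t - 1, by omega⟩ : Fin t)
              (Finset.univ.filter (· < (⟨t - 1, by omega⟩ : Fin t))), ns i := by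
          rw [Finset.sum_insert (by simp), hSf]; ring
        have h2 : insert (⟨t - 1, by omega⟩ : Fin t)
            (Finset.univ.filter (· < (⟨t - 1, by omega⟩ : Fin t))) = Finset.univ := by
          apply Finset.eq_univ_iff_forall.mpr
          intro i
          simp only [Finset.mem_insert, Finset.mem_filter, Finset.mem_univ, true_and,
            Fin.lt_def, Fin.ext_iff]
          have := i.isLt
          omega
        rw [h1, h2]
        exact hn.symm
      omega
    set s := T.min' hTne with hs
    have hsmem : (l : ℕ) < S s + ns s := by
      have := T.min'_mem hTne
      simp only [hT, Finset.mem_filter, Finset.mem_univ, true_and] at this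
      exact this
    refine ⟨s, ?_, hsmem⟩
    by_contra hc
    push_neg at hc
    have hs0 : 0 < (s : ℕ) := by
      by_contra h0
      push_neg at h0
      have : Finset.univ.filter (· < s) = (∅ : Finset (Fin t)) := by
        apply Finset.filter_false_of_mem
        intro i _
        simp only [Fin.lt_def]
        omega
      rw [hSf, this] at hc
      simp at hc
    set s' : Fin t := ⟨(s : ℕ) - 1, by omega⟩ with hs'
    have hstep : S s' + ns s' = S s := by
      have h1 : S s' + ns s' = ∑ i ∈ insert s' (Finset.univ.filter (· < s')), ns i := by
        rw [Finset.sum_insert (by simp), hSf]; ring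
      rw [h1, hSf]
      congr 1
      ext i
      simp only [Finset.mem_insert, Finset.mem_filter, Finset.mem_univ, true_and,
        Fin.lt_def, Fin.ext_iff, hs']
      omega
    have hs'T : s' ∈ T := by
      simp only [hT, Finset.mem_filter, Finset.mem_univ, true_and]
      omega
    have h1 := T.min'_le s' hs'T
    have h2 : ¬ (s' < s) := not_lt.mpr h1
    simp only [Fin.lt_def, hs'] at h2
    omega
  -- ## Step 2 : generalities about the weight
  have hne0 : ∀ v : Fin n → F, (∃ l, v l ≠ 0) → v ≠ 0 := by
    rintro v ⟨l, hl⟩ hz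
    exact hl (by rw [hz]; rfl)
  have htop : ∀ u : Fin n → F, u ≠ 0 → ∃ s : Fin t,
      (∀ l : Fin n, u l ≠ 0 → (l : ℕ) < S s + ns s) ∧
      (∃ l : Fin n, u l ≠ 0 ∧ S s ≤ (l : ℕ)) := by
    intro u hu
    have hne : (Finset.univ.filter fun l : Fin n => u l ≠ 0).Nonempty := by
      rcases Function.ne_iff.mp hu with ⟨l, hl⟩
      exact ⟨l, by simp only [Finset.mem_filter, Finset.mem_univ, true_and]; exact hl⟩
    set l0 := (Finset.univ.filter fun l : Fin n => u l ≠ 0).max' hne with hl0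
    have hl0mem : u l0 ≠ 0 := by
      have := (Finset.univ.filter fun l : Fin n => u l ≠ 0).max'_mem hne
      simp only [Finset.mem_filter, Finset.mem_univ, true_and] at this
      exact this
    obtain ⟨s, hs1, hs2⟩ := hblock l0
    refine ⟨s, fun l hl => ?_, ⟨l0, hl0mem, hs1⟩⟩
    have hle : l ≤ l0 := Finset.le_max' _ l
      (by simp only [Finset.mem_filter, Finset.mem_univ, true_and]; exact hl)
    have : (l : ℕ) ≤ (l0 : ℕ) := hle
    omega
  have hcard_le : ∀ (u : Fin n → F) (s : Fin t),
      (Finset.univ.filter fun l : Fin n =>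
        u l ≠ 0 ∧ S s ≤ (l : ℕ) ∧ (l : ℕ) < S s + ns s).card ≤ ns s := by
    intro u s
    have h1 : (Finset.univ.filter fun l : Fin n =>
        u l ≠ 0 ∧ S s ≤ (l : ℕ) ∧ (l : ℕ) < S s + ns s).card
        ≤ (Finset.Ico (S s) (S s + ns s)).card := by
      refine Finset.card_le_card_of_injOn (fun l => (l : ℕ)) ?_ ?_
      · intro l hl
        simp only [Finset.mem_coe, Finset.mem_filter, Finset.mem_univ, true_and] at hl
        simp only [Finset.mem_coe, Finset.mem_Ico]
        exact hl.2
      · exact fun a _ b _ h => Fin.val_injective h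
    rw [Nat.card_Ico] at h1
    omega
  have hcard_pos : ∀ (u : Fin n → F) (s : Fin t),
      (∀ l : Fin n, u l ≠ 0 → (l : ℕ) < S s + ns s) →
      (∃ l : Fin n, u l ≠ 0 ∧ S s ≤ (l : ℕ)) →
      0 < (Finset.univ.filter fun l : Fin n =>
        u l ≠ 0 ∧ S s ≤ (l : ℕ) ∧ (l : ℕ) < S s + ns s).card := by
    intro u s h1 h2
    apply Finset.card_pos.mpr
    obtain ⟨l, hl1, hl2⟩ := h2
    refine ⟨l, ?_⟩
    simp only [Finset.mem_filter, Finset.mem_univ, true_and]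
    exact ⟨hl1, hl2, h1 l hl1⟩
  have hwpos : ∀ u : Fin n → F, u ≠ 0 → 0 < w u := by
    intro u hu
    obtain ⟨s, h1, h2⟩ := htop u hu
    rw [hw u hu s h1 h2]
    have := hcard_pos u s h1 h2
    omega
  have hsame : ∀ (u v : Fin n → F) (s : Fin t), u ≠ 0 → v ≠ 0 →
      (∀ l : Fin n, u l ≠ 0 → (l : ℕ) < S s + ns s) →
      (∃ l : Fin n, u l ≠ 0 ∧ S s ≤ (l : ℕ)) →
      (∀ l : Fin n, v l ≠ 0 → (l : ℕ) < S s + ns s) →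
      (∃ l : Fin n, v l ≠ 0 ∧ S s ≤ (l : ℕ)) →
      (Finset.univ.filter fun l : Fin n =>
        u l ≠ 0 ∧ S s ≤ (l : ℕ) ∧ (l : ℕ) < S s + ns s).card =
      (Finset.univ.filter fun l : Fin n =>
        v l ≠ 0 ∧ S s ≤ (l : ℕ) ∧ (l : ℕ) < S s + ns s).card →
      w u = w v := by
    intro u v s hu hv h1 h2 h3 h4 h5
    rw [hw u hu s h1 h2, hw v hv s h3 h4, h5]
  -- ## Step 3 : the main statement
  intro x y
  constructor
  swap
  · rintro ⟨g, hg, rfl⟩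
    exact (hg x).symm
  intro hxy
  by_cases hx0 : x = 0
  · have hy0 : y = 0 := by
      by_contra hy
      have h1 := hwpos y hy
      rw [← hxy, hx0, hw0] at h1
      omega
    exact ⟨LinearEquiv.refl F _, fun u => rfl, by rw [hx0, hy0]; simp⟩
  by_cases hy0 : y = 0
  · exfalso
    have h1 := hwpos x hx0
    rw [hxy, hy0, hw0] at h1
    omega
  obtain ⟨sx, hx1, hx2⟩ := htop x hx0
  obtain ⟨sy, hy1, hy2⟩ := htop y hy0
  have hwx := hw x hx0 sx hx1 hx2
  have hwy := hw y hy0 sy hy1 hy2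
  rw [hwx, hwy] at hxy
  have hsxy : sx = sy := by
    rcases lt_trichotomy sx sy with h | h | h
    · exfalso
      have h1 := hSstep sx sy h
      have h2 := hcard_le x sx
      have h3 := hcard_pos y sy hy1 hy2
      omega
    · exact h
    · exfalso
      have h1 := hSstep sy sx h
      have h2 := hcard_le y sy
      have h3 := hcard_pos x sx hx1 hx2
      omega
  subst hsxy
  have hm : (Finset.univ.filter fun l : Fin n =>
        y l ≠ 0 ∧ S sx ≤ (l : ℕ) ∧ (l : ℕ) < S sx + ns sx).card =
      (Finset.univ.filter fun l : Fin n =>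
        x l ≠ 0 ∧ S sx ≤ (l : ℕ) ∧ (l : ℕ) < S sx + ns sx).card := by omega
  -- the pivot coordinate `k`
  obtain ⟨k, hk0, hk1⟩ := hx2
  have hk2 : (k : ℕ) < S sx + ns sx := hx1 k hk0
  -- ### the shear `E`
  set c : Fin n → F := fun l => if (l : ℕ) < S sx then (y l - x l) * (x k)⁻¹ else 0 with hc
  have hck : c k = 0 := by
    rw [hc]; exact if_neg (by omega)
  set E := stmt19shear F k c hck with hE
  have hEapply : ∀ (u : Fin n → F) (l : Fin n), E u l = u l + c l * u k :=
    fun u l => rfl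
  have hEhigh : ∀ (u : Fin n → F) (l : Fin n), S sx ≤ (l : ℕ) → E u l = u l := by
    intro u l hl
    rw [hEapply, hc]
    simp only [if_neg (by omega : ¬ (l : ℕ) < S sx), zero_mul, add_zero]
  have hEw : ∀ u : Fin n → F, w (E u) = w u := by
    intro u
    by_cases hu : u = 0
    · rw [hu, map_zero]
    obtain ⟨s', h1, h2⟩ := htop u hu
    rcases le_or_gt sx s' with hss | hss
    · have hSS : S sx ≤ S s' := hSmono _ _ hss
      have hii : ∃ l : Fin n, E u l ≠ 0 ∧ S s' ≤ (l : ℕ) := by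
        obtain ⟨l, hl1, hl2⟩ := h2
        exact ⟨l, by rw [hEhigh u l (le_trans hSS hl2)]; exact hl1, hl2⟩
      refine hsame (E u) u s' (hne0 _ ⟨hii.choose, hii.choose_spec.1⟩) hu ?_ hii h1 h2 ?_
      · intro l hl
        by_cases hls : (l : ℕ) < S sx
        · have := hpos s'; omega
        · rw [hEhigh u l (by omega)] at hl
          exact h1 l hl
      · congr 1
        ext l
        simp only [Finset.mem_filter, Finset.mem_univ, true_and]
        by_cases hP : S s' ≤ (l : ℕ)
        · rw [hEhigh u l (le_trans hSS hP)]
        · tauto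
    · have hk0' : u k = 0 := by
        by_contra h
        have h4 := h1 k h
        have h5 := hSstep s' sx hss
        omega
      have : E u = u := by
        funext l
        rw [hEapply, hk0', mul_zero, add_zero]
      rw [this]
  -- ### the permutation `τ`
  have hcards : Fintype.card
        {l : {l : Fin n // S sx ≤ (l : ℕ) ∧ (l : ℕ) < S sx + ns sx} // y l.1 ≠ 0}
      = Fintype.card
        {l : {l : Fin n // S sx ≤ (l : ℕ) ∧ (l : ℕ) < S sx + ns sx} // x l.1 ≠ 0} := by
    have c1 := Fintype.card_congr (Equiv.subtypeSubtypeEquivSubtypeInter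
      (fun l : Fin n => S sx ≤ (l : ℕ) ∧ (l : ℕ) < S sx + ns sx) (fun l : Fin n => y l ≠ 0))
    have c2 := Fintype.card_congr (Equiv.subtypeSubtypeEquivSubtypeInter
      (fun l : Fin n => S sx ≤ (l : ℕ) ∧ (l : ℕ) < S sx + ns sx) (fun l : Fin n => x l ≠ 0))
    rw [c1, c2, Fintype.card_subtype, Fintype.card_subtype]
    have e1 : (Finset.univ.filter fun l : Fin n =>
          (S sx ≤ (l : ℕ) ∧ (l : ℕ) < S sx + ns sx) ∧ y l ≠ 0) =
        (Finset.univ.filter fun l : Fin n =>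
          y l ≠ 0 ∧ S sx ≤ (l : ℕ) ∧ (l : ℕ) < S sx + ns sx) := by
      ext l
      simp only [Finset.mem_filter, Finset.mem_univ, true_and]
      tauto
    have e2 : (Finset.univ.filter fun l : Fin n =>
          (S sx ≤ (l : ℕ) ∧ (l : ℕ) < S sx + ns sx) ∧ x l ≠ 0) =
        (Finset.univ.filter fun l : Fin n =>
          x l ≠ 0 ∧ S sx ≤ (l : ℕ) ∧ (l : ℕ) < S sx + ns sx) := by
      ext l
      simp only [Finset.mem_filter, Finset.mem_univ, true_and]
      tauto
    rw [e1, e2, hm]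
  set e := Fintype.equivOfCardEq hcards with he
  set τ : Equiv.Perm (Fin n) := (Equiv.extendSubtype e).subtypeCongr (Equiv.refl _) with hτ
  have hτfix : ∀ l : Fin n, ¬ (S sx ≤ (l : ℕ) ∧ (l : ℕ) < S sx + ns sx) → τ l = l := by
    intro l h
    rw [hτ, Equiv.Perm.subtypeCongr.apply, dif_neg h]
    rfl
  have hτmem : ∀ (l : Fin n), (S sx ≤ (l : ℕ) ∧ (l : ℕ) < S sx + ns sx) →
      S sx ≤ (τ l : ℕ) ∧ (τ l : ℕ) < S sx + ns sx := by
    intro l h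
    rw [hτ, Equiv.Perm.subtypeCongr.apply, dif_pos h]
    exact ((Equiv.extendSubtype e) ⟨l, h⟩).2
  have hτx : ∀ (l : Fin n) (h : S sx ≤ (l : ℕ) ∧ (l : ℕ) < S sx + ns sx),
      (x (τ l) ≠ 0 ↔ y l ≠ 0) := by
    intro l h
    rw [hτ, Equiv.Perm.subtypeCongr.apply, dif_pos h]
    constructor
    · intro hx
      by_contra hy
      exact hx (not_not.mp (Equiv.extendSubtype_not_mem e ⟨l, h⟩ (fun hy' => hy' hy)))
    · intro hy
      exact Equiv.extendSubtype_mem e ⟨l, h⟩ hy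
  have hτinv : ∀ l : Fin n, (S sx ≤ (l : ℕ) ∧ (l : ℕ) < S sx + ns sx) →
      (S sx ≤ ((τ.symm l : Fin n) : ℕ) ∧ ((τ.symm l : Fin n) : ℕ) < S sx + ns sx) := by
    intro l h
    by_contra hcon
    have h2 := hτfix _ hcon
    rw [Equiv.apply_symm_apply] at h2
    rw [← h2] at hcon
    exact hcon h
  set P := LinearEquiv.funCongrLeft F F τ with hP
  have hPapply : ∀ (u : Fin n → F) (l : Fin n), P u l = u (τ l) := fun u l => rfl
  have hPw : ∀ u : Fin n → F, w (P u) = w u := by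
    intro u
    by_cases hu : u = 0
    · rw [hu, map_zero]
    obtain ⟨s', h1, h2⟩ := htop u hu
    rcases lt_trichotomy s' sx with hss | hss | hss
    · -- `u` vanishes on block `sx`, so `P u = u`
      have hzero : ∀ l : Fin n, (S sx ≤ (l : ℕ) ∧ (l : ℕ) < S sx + ns sx) → u l = 0 := by
        intro l hl
        by_contra h
        have h4 := h1 l h
        have h5 := hSstep s' sx hss
        omega
      have : P u = u := by
        funext l
        rw [hPapply]
        by_cases hB : S sx ≤ (l : ℕ) ∧ (l : ℕ) < S sx + ns sx
        · rw [hzero _ (hτmem l hB), hzero _ hB]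
        · rw [hτfix l hB]
      rw [this]
    · -- same block : the support is permuted
      subst hss
      have hii : ∃ l : Fin n, P u l ≠ 0 ∧ S s' ≤ (l : ℕ) := by
        obtain ⟨l, hl1, hl2⟩ := h2
        have hB : S s' ≤ (l : ℕ) ∧ (l : ℕ) < S s' + ns s' := ⟨hl2, h1 l hl1⟩
        refine ⟨τ.symm l, ?_, (hτinv l hB).1⟩
        rw [hPapply, Equiv.apply_symm_apply]
        exact hl1
      refine hsame (P u) u s' (hne0 _ ⟨hii.choose, hii.choose_spec.1⟩) hu ?_ hii h1 h2 ?_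
      · intro l hl
        rw [hPapply] at hl
        by_cases hB : S s' ≤ (l : ℕ) ∧ (l : ℕ) < S s' + ns s'
        · exact hB.2
        · rw [hτfix l hB] at hl
          exact h1 l hl
      · refine Finset.card_bij (fun l _ => τ l) ?_ ?_ ?_
        · intro l hl
          simp only [Finset.mem_filter, Finset.mem_univ, true_and] at hl ⊢
          rw [hPapply] at hl
          exact ⟨hl.1, (hτmem l hl.2).1, (hτmem l hl.2).2⟩
        · intro a _ b _ hab
          exact τ.injective hab
        · intro l' hl'
          simp only [Finset.mem_filter, Finset.mem_univ, true_and] at hl'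
          refine ⟨τ.symm l', ?_, Equiv.apply_symm_apply _ _⟩
          simp only [Finset.mem_filter, Finset.mem_univ, true_and]
          have hB := hτinv l' hl'.2
          rw [hPapply, Equiv.apply_symm_apply]
          exact ⟨hl'.1, hB⟩
    · -- `τ` fixes everything at or above block `s'`
      have hτhigh : ∀ l : Fin n, S s' ≤ (l : ℕ) → τ l = l := by
        intro l hl
        apply hτfix
        have := hSstep sx s' hss
        omega
      have hii : ∃ l : Fin n, P u l ≠ 0 ∧ S s' ≤ (l : ℕ) := by
        obtain ⟨l, hl1, hl2⟩ := h2
        refine ⟨l, ?_, hl2⟩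
        rw [hPapply, hτhigh l hl2]
        exact hl1
      refine hsame (P u) u s' (hne0 _ ⟨hii.choose, hii.choose_spec.1⟩) hu ?_ hii h1 h2 ?_
      · intro l hl
        rw [hPapply] at hl
        by_cases hB : S sx ≤ (l : ℕ) ∧ (l : ℕ) < S sx + ns sx
        · have := hSstep sx s' hss
          have := hpos s'
          omega
        · rw [hτfix l hB] at hl
          exact h1 l hl
      · congr 1
        ext l
        simp only [Finset.mem_filter, Finset.mem_univ, true_and]
        by_cases hl : S s' ≤ (l : ℕ)
        · rw [hPapply, hτhigh l hl]
        · tauto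
  -- ### the diagonal map `D`
  set d : Fin n → F := fun l =>
    if (S sx ≤ (l : ℕ) ∧ (l : ℕ) < S sx + ns sx) ∧ x (τ l) ≠ 0
    then y l * (x (τ l))⁻¹ else 1 with hd
  have hdne : ∀ l, d l ≠ 0 := by
    intro l
    simp only [hd]
    split_ifs with h
    · exact mul_ne_zero ((hτx l h.1).mp h.2) (inv_ne_zero h.2)
    · exact one_ne_zero
  set D := stmt19diag F d hdne with hD
  have hDapply : ∀ (u : Fin n → F) (l : Fin n), D u l = d l * u l := fun u l => rfl
  have hDne : ∀ (u : Fin n → F) (l : Fin n), (D u l ≠ 0 ↔ u l ≠ 0) := by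
    intro u l
    rw [hDapply]
    simp [hdne l]
  have hDw : ∀ u : Fin n → F, w (D u) = w u := by
    intro u
    by_cases hu : u = 0
    · rw [hu, map_zero]
    obtain ⟨s', h1, h2⟩ := htop u hu
    have hii : ∃ l : Fin n, D u l ≠ 0 ∧ S s' ≤ (l : ℕ) := by
      obtain ⟨l, hl1, hl2⟩ := h2
      exact ⟨l, (hDne u l).mpr hl1, hl2⟩
    refine hsame (D u) u s' (hne0 _ ⟨hii.choose, hii.choose_spec.1⟩) hu ?_ hii h1 h2 ?_
    · intro l hl
      exact h1 l ((hDne u l).mp hl)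
    · congr 1
      ext l
      simp only [Finset.mem_filter, Finset.mem_univ, true_and]
      rw [hDne u l]
  -- ### the composite automorphism
  refine ⟨(E.trans P).trans D, ?_, ?_⟩
  · intro u
    simp only [LinearEquiv.trans_apply]
    rw [hDw, hPw, hEw]
  · have hEx : ∀ l : Fin n, E x l = if (l : ℕ) < S sx then y l else x l := by
      intro l
      rw [hEapply]
      simp only [hc]
      by_cases h : (l : ℕ) < S sx
      · rw [if_pos h, if_pos h, mul_assoc, inv_mul_cancel₀ hk0, mul_one]
        ring
      · rw [if_neg h, if_neg h, zero_mul, add_zero]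
    simp only [LinearEquiv.trans_apply]
    funext l
    rw [hDapply, hPapply]
    by_cases hB : S sx ≤ (l : ℕ) ∧ (l : ℕ) < S sx + ns sx
    · have hτB := hτmem l hB
      have hExτ : E x (τ l) = x (τ l) := by
        rw [hEx]
        exact if_neg (by omega)
      rw [hExτ]
      by_cases hxτ : x (τ l) ≠ 0
      · simp only [hd]
        rw [if_pos (And.intro hB hxτ)]
        rw [mul_assoc, inv_mul_cancel₀ hxτ, mul_one]
      · push_neg at hxτ
        have hyl : y l = 0 := by
          by_contra hy
          exact ((hτx l hB).mpr hy) hxτ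
        rw [hxτ, mul_zero, hyl]
    · have hτl : τ l = l := hτfix l hB
      have hd1 : d l = 1 := by
        simp only [hd]
        exact if_neg (fun h => hB h.1)
      rw [hτl, hd1, one_mul, hEx]
      by_cases h : (l : ℕ) < S sx
      · rw [if_pos h]
      · rw [if_neg h]
        have hxl : x l = 0 := by
          by_contra hx
          have := hx1 l hx
          omega
        have hyl : y l = 0 := by
          by_contra hy
          have := hy1 l hy
          omega
        rw [hxl, hyl]
end
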